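/- arXiv:2501.12944 — 8 statements merged into one kernel-verified Lean document; each statement's English description precedes it below -/
import Mathlib

section
/- Let κ, K, c > 0, p > 1 and T > 0. Let y : ℝ → ℝ be differentiable on [0,T] with y(0) = 0 and y(t) ≥ 0 for all t ∈ [0,T], and suppose that y'(t) ≤ -κ·y(t) + K·y(t)^p + c for all t ∈ [0,T]. If 2c/κ ≤ (κ/(2K))^{1/(p-1)}, then y(t) ≤ 2c/κ for all t ∈ [0,T]. -/
open Topology Filter


/-- ODE comparison argument. A nonnegative differentiable function
`y` on `[0,T]` with `y 0 = 0` satisfying `y' ≤ -κ y + K y^p + c` stays below `2c/κ`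
provided `2c/κ ≤ (κ/(2K))^(1/(p-1))`. -/
theorem stmt_0 (κ K c p T : ℝ) (hκ : 0 < κ) (hK : 0 < K) (hc : 0 < c)
    (hp : 1 < p) (hT : 0 < T) (y y' : ℝ → ℝ)
    (hderiv : ∀ t ∈ Set.Icc (0:ℝ) T, HasDerivWithinAt y (y' t) (Set.Icc (0:ℝ) T) t)
    (hy0 : y 0 = 0)
    (hynn : ∀ t ∈ Set.Icc (0:ℝ) T, 0 ≤ y t)
    (hineq : ∀ t ∈ Set.Icc (0:ℝ) T, y' t ≤ -κ * y t + K * (y t) ^ p + c)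
    (hsmall : 2 * c / κ ≤ (κ / (2 * K)) ^ (1 / (p - 1))) :
    ∀ t ∈ Set.Icc (0:ℝ) T, y t ≤ 2 * c / κ := by
  set M : ℝ := 2 * c / κ with hMdef
  have hM : 0 < M := by positivity
  have hp1 : 0 < p - 1 := by linarith
  -- the key pointwise estimate: if 0 ≤ u ≤ M then K * u^p ≤ (κ/2) * u
  have hkey : ∀ u : ℝ, 0 ≤ u → u ≤ M → K * u ^ p ≤ κ / 2 * u := by
    intro u hu0 huM
    rcases eq_or_lt_of_le hu0 with h | h
    · rw [← h, Real.zero_rpow (by positivity)]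
      simp
    · have hR : ((κ / (2 * K)) ^ (1 / (p - 1))) ^ (p - 1) = κ / (2 * K) := by
        rw [← Real.rpow_mul (by positivity), one_div_mul_cancel (ne_of_gt hp1),
          Real.rpow_one]
      have h1 : u ^ (p - 1) ≤ κ / (2 * K) := by
        rw [← hR]
        exact Real.rpow_le_rpow hu0 (le_trans huM hsmall) (le_of_lt hp1)
      have h2 : u ^ p = u ^ (p - 1) * u := by
        have hpe : p = (p - 1) + 1 := by ring
        conv_lhs => rw [hpe]
        rw [Real.rpow_add h, Real.rpow_one]
      calc K * u ^ p = K * u ^ (p - 1) * u := by rw [h2]; ring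
        _ ≤ K * (κ / (2 * K)) * u := by
            apply mul_le_mul_of_nonneg_right _ hu0
            exact mul_le_mul_of_nonneg_left h1 hK.le
        _ = κ / 2 * u := by field_simp
  -- continuity of y on [0,T]
  have hcont : ContinuousOn y (Set.Icc 0 T) := fun t ht =>
    (hderiv t ht).continuousWithinAt
  by_contra hcon
  push_neg at hcon
  obtain ⟨tb, htb, hytb⟩ := hcon
  -- the set of times where y ≥ M
  set S : Set ℝ := Set.Icc 0 T ∩ y ⁻¹' Set.Ici M with hSdef
  have hSclosed : IsClosed S :=
    hcont.preimage_isClosed_of_isClosed isClosed_Icc isClosed_Ici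
  have hSne : S.Nonempty := ⟨tb, htb, le_of_lt hytb⟩
  have hSbdd : BddBelow S := ⟨0, fun x hx => hx.1.1⟩
  set t₀ : ℝ := sInf S with ht₀def
  have ht₀S : t₀ ∈ S := hSclosed.csInf_mem hSne hSbdd
  have ht₀Icc : t₀ ∈ Set.Icc 0 T := ht₀S.1
  have hyt₀ : M ≤ y t₀ := ht₀S.2
  have ht₀pos : 0 < t₀ := by
    rcases eq_or_lt_of_le ht₀Icc.1 with h | h
    · exfalso; rw [← h, hy0] at hyt₀; linarith
    · exact h
  -- before t₀, y < M
  have hlt : ∀ s, 0 ≤ s → s < t₀ → y s < M := by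
    intro s hs0 hst
    by_contra hns
    push_neg at hns
    have hsS : s ∈ S := ⟨⟨hs0, le_trans hst.le ht₀Icc.2⟩, hns⟩
    exact absurd (csInf_le hSbdd hsS) (not_le.mpr hst)
  -- by continuity from the left, y t₀ ≤ M
  have hyt₀le : y t₀ ≤ M := by
    have hne : (𝓝[Set.Ioo 0 t₀] t₀).NeBot := right_nhdsWithin_Ioo_neBot ht₀pos
    have htend : Filter.Tendsto y (𝓝[Set.Ioo 0 t₀] t₀) (𝓝 (y t₀)) := by
      apply (hcont t₀ ht₀Icc).mono
      intro x hx
      exact ⟨hx.1.le, le_trans hx.2.le ht₀Icc.2⟩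
    refine le_of_tendsto htend ?_
    filter_upwards [self_mem_nhdsWithin] with x hx
    exact (hlt x hx.1.le hx.2).le
  have hsub : Set.Icc (0:ℝ) t₀ ⊆ Set.Icc 0 T := Set.Icc_subset_Icc le_rfl ht₀Icc.2
  have hyleM : ∀ t ∈ Set.Icc (0:ℝ) t₀, y t ≤ M := by
    intro t ht
    rcases eq_or_lt_of_le ht.2 with h | h
    · rw [h]; exact hyt₀le
    · exact (hlt t ht.1 h).le
  -- the auxiliary function φ t = exp(κ/2 * t) * (y t - M)
  set φ : ℝ → ℝ := fun t => Real.exp (κ / 2 * t) * (y t - M) with hφdef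
  set φ' : ℝ → ℝ := fun t =>
    Real.exp (κ / 2 * t) * (κ / 2) * (y t - M) + Real.exp (κ / 2 * t) * y' t with hφ'def
  have hφderiv : ∀ t ∈ Set.Icc (0:ℝ) t₀,
      HasDerivWithinAt φ (φ' t) (Set.Icc 0 t₀) t := by
    intro t ht
    have h1 : HasDerivWithinAt (fun s => Real.exp (κ / 2 * s))
        (Real.exp (κ / 2 * t) * (κ / 2)) (Set.Icc 0 t₀) t := by
      have := (((hasDerivAt_id t).const_mul (κ / 2)).exp).hasDerivWithinAt
        (s := Set.Icc (0:ℝ) t₀)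
      simpa using this
    have h2 : HasDerivWithinAt (fun s => y s - M) (y' t) (Set.Icc 0 t₀) t :=
      (((hderiv t (hsub ht)).mono hsub).sub_const M)
    exact h1.mul h2
  -- φ' ≤ 0 on [0, t₀]
  have hφ'nonpos : ∀ t ∈ Set.Icc (0:ℝ) t₀, φ' t ≤ 0 := by
    intro t ht
    have htT : t ∈ Set.Icc (0:ℝ) T := hsub ht
    have h1 : y' t ≤ -κ * y t + K * (y t) ^ p + c := hineq t htT
    have h2 : K * (y t) ^ p ≤ κ / 2 * y t := hkey (y t) (hynn t htT) (hyleM t ht)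
    have h3 : κ / 2 * (y t - M) + y' t ≤ 0 := by
      have hcM : κ / 2 * M = c := by
        rw [hMdef]; field_simp
      nlinarith
    have h4 : (0:ℝ) < Real.exp (κ / 2 * t) := Real.exp_pos _
    calc φ' t = Real.exp (κ / 2 * t) * (κ / 2 * (y t - M) + y' t) := by
          rw [hφ'def]; ring
      _ ≤ Real.exp (κ / 2 * t) * 0 := mul_le_mul_of_nonneg_left h3 h4.le
      _ = 0 := mul_zero _
  -- hence φ is antitone on [0, t₀]
  have hanti : AntitoneOn φ (Set.Icc 0 t₀) := by
    have hint : interior (Set.Icc (0:ℝ) t₀) = Set.Ioo 0 t₀ := interior_Icc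
    apply antitoneOn_of_deriv_nonpos (convex_Icc 0 t₀)
      (fun t ht => (hφderiv t ht).continuousWithinAt)
    · intro t ht
      rw [hint] at ht
      have hat : HasDerivAt φ (φ' t) t := by
        apply (hφderiv t (Set.Ioo_subset_Icc_self ht)).hasDerivAt
        exact Icc_mem_nhds ht.1 ht.2
      exact hat.differentiableAt.differentiableWithinAt
    · intro t ht
      rw [hint] at ht
      have hat : HasDerivAt φ (φ' t) t := by
        apply (hφderiv t (Set.Ioo_subset_Icc_self ht)).hasDerivAt
        exact Icc_mem_nhds ht.1 ht.2
      rw [hat.deriv]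
      exact hφ'nonpos t (Set.Ioo_subset_Icc_self ht)
  have h0mem : (0:ℝ) ∈ Set.Icc (0:ℝ) t₀ := ⟨le_rfl, ht₀pos.le⟩
  have ht₀mem : t₀ ∈ Set.Icc (0:ℝ) t₀ := ⟨ht₀pos.le, le_rfl⟩
  have hmono := hanti h0mem ht₀mem ht₀pos.le
  have hφ0 : φ 0 = -M := by simp [hφdef, hy0]
  have hφt₀ : 0 ≤ φ t₀ := by
    apply mul_nonneg (Real.exp_pos _).le
    linarith
  rw [hφ0] at hmono
  linarith
end

section
/- Let 0 < δ < 1 and λ > 0. Then for every t ≥ 0, ∫₀^t e^{−λ(t−s)} (t−s)^{δ−1} ds + λ·∫₀^t e^{−λ(t−s)} (t−s)^{δ} ds + e^{−λt}·t^{δ} ≤ λ^{−δ}·(Γ(δ) + Γ(1+δ) + δ^{−δ}), where Γ denotes the Gamma function. -/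
open Real MeasureTheory Set

lemma aux_conv (a lam t : ℝ) (ha : 0 < a) (hlam : 0 < lam) (ht : 0 ≤ t) :
    (∫ s in (0:ℝ)..t, Real.exp (-lam * (t - s)) * (t - s) ^ (a - 1)) ≤
      lam ^ (-a) * Real.Gamma a := by
  have hint : IntegrableOn (fun u : ℝ => u ^ (a - 1) * Real.exp (-(lam * u))) (Ioi 0) := by
    have := integrableOn_rpow_mul_exp_neg_mul_rpow (s := a - 1) (p := 1)
      (by linarith) zero_lt_one hlam
    refine this.congr_fun (fun x hx => ?_) measurableSet_Ioi
    beta_reduce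
    rw [Real.rpow_one, neg_mul]
  have key : ∫ u in Ioi (0:ℝ), u ^ (a - 1) * Real.exp (-(lam * u))
      = (1 / lam) ^ a * Real.Gamma a :=
    Real.integral_rpow_mul_exp_neg_mul_Ioi ha hlam
  have h1 : (∫ s in (0:ℝ)..t, Real.exp (-lam * (t - s)) * (t - s) ^ (a - 1))
      = ∫ u in (0:ℝ)..t, u ^ (a - 1) * Real.exp (-(lam * u)) := by
    have := intervalIntegral.integral_comp_sub_left (a := (0:ℝ)) (b := t)
      (fun u : ℝ => u ^ (a - 1) * Real.exp (-(lam * u))) t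
    simp only [sub_self, sub_zero] at this
    rw [← this]
    refine intervalIntegral.integral_congr (fun s _ => ?_)
    rw [mul_comm, neg_mul]
  rw [h1, intervalIntegral.integral_of_le ht]
  calc ∫ u in Ioc (0:ℝ) t, u ^ (a - 1) * Real.exp (-(lam * u))
      ≤ ∫ u in Ioi (0:ℝ), u ^ (a - 1) * Real.exp (-(lam * u)) := by
        refine setIntegral_mono_set hint ?_ (HasSubset.Subset.eventuallyLE Ioc_subset_Ioi_self)
        filter_upwards [ae_restrict_mem measurableSet_Ioi] with x hx
        have : (0:ℝ) < x := hx
        positivity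
    _ = lam ^ (-a) * Real.Gamma a := by
        rw [key, one_div, ← Real.rpow_neg_one lam, ← Real.rpow_mul hlam.le]
        norm_num

lemma aux_exp (δ lam t : ℝ) (hδ0 : 0 < δ) (hδ1 : δ < 1) (hlam : 0 < lam) (ht : 0 ≤ t) :
    Real.exp (-lam * t) * t ^ δ ≤ lam ^ (-δ) * δ ^ (-δ) := by
  have hdd : (1:ℝ) ≤ δ ^ (-δ) :=
    Real.one_le_rpow_of_pos_of_le_one_of_nonpos hδ0 hδ1.le (by linarith)
  have hmain : Real.exp (-lam * t) * t ^ δ ≤ lam ^ (-δ) := by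
    rcases le_or_gt (lam * t) 1 with h | h
    · have ht' : t ≤ 1 / lam := (le_div_iff₀ hlam).mpr (by linarith)
      have h1 : t ^ δ ≤ (1 / lam) ^ δ := Real.rpow_le_rpow ht ht' hδ0.le
      have h2 : ((1:ℝ) / lam) ^ δ = lam ^ (-δ) := by
        rw [one_div, Real.inv_rpow hlam.le, ← Real.rpow_neg hlam.le]
      have h3 : Real.exp (-lam * t) ≤ 1 := Real.exp_le_one_iff.mpr (by nlinarith)
      calc Real.exp (-lam * t) * t ^ δ ≤ 1 * ((1 / lam) ^ δ) :=
            mul_le_mul h3 h1 (by positivity) (by norm_num)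
        _ = lam ^ (-δ) := by rw [one_mul, h2]
    · have hxle : (lam * t) ^ δ ≤ lam * t := by
        calc (lam * t) ^ δ ≤ (lam * t) ^ (1:ℝ) :=
              Real.rpow_le_rpow_of_exponent_le h.le (by linarith)
          _ = lam * t := Real.rpow_one _
      have hxe : lam * t ≤ Real.exp (lam * t) := by linarith [Real.add_one_le_exp (lam * t)]
      have key : Real.exp (-(lam * t)) * (lam * t) ^ δ ≤ 1 := by
        rw [Real.exp_neg, inv_mul_le_iff₀ (Real.exp_pos _), mul_one]
        exact hxle.trans hxe
      have hone : lam ^ (-δ) * lam ^ δ = 1 := by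
        rw [← Real.rpow_add hlam]; norm_num
      have heq : Real.exp (-lam * t) * t ^ δ
          = lam ^ (-δ) * (Real.exp (-(lam * t)) * (lam * t) ^ δ) := by
        rw [Real.mul_rpow hlam.le ht, neg_mul]
        calc Real.exp (-(lam * t)) * t ^ δ
            = (lam ^ (-δ) * lam ^ δ) * (Real.exp (-(lam * t)) * t ^ δ) := by
              rw [hone, one_mul]
          _ = lam ^ (-δ) * (Real.exp (-(lam * t)) * (lam ^ δ * t ^ δ)) := by ring
      rw [heq]
      calc lam ^ (-δ) * (Real.exp (-(lam * t)) * (lam * t) ^ δ) ≤ lam ^ (-δ) * 1 :=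
            mul_le_mul_of_nonneg_left key (by positivity)
        _ = lam ^ (-δ) := mul_one _
  calc Real.exp (-lam * t) * t ^ δ ≤ lam ^ (-δ) * 1 := by rw [mul_one]; exact hmain
    _ ≤ lam ^ (-δ) * δ ^ (-δ) := by
        have : (0:ℝ) ≤ lam ^ (-δ) := by positivity
        nlinarith

/-- the damped-convolution integral estimate. -/
theorem stmt_5 (δ lam : ℝ) (hδ0 : 0 < δ) (hδ1 : δ < 1) (hlam : 0 < lam)
    (t : ℝ) (ht : 0 ≤ t) :
    (∫ s in (0:ℝ)..t, Real.exp (-lam * (t - s)) * (t - s) ^ (δ - 1)) +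
      lam * (∫ s in (0:ℝ)..t, Real.exp (-lam * (t - s)) * (t - s) ^ δ) +
      Real.exp (-lam * t) * t ^ δ ≤
    lam ^ (-δ) * (Real.Gamma δ + Real.Gamma (1 + δ) + δ ^ (-δ)) := by
  have h1 := aux_conv δ lam t hδ0 hlam ht
  have h2 : lam * (∫ s in (0:ℝ)..t, Real.exp (-lam * (t - s)) * (t - s) ^ δ)
      ≤ lam ^ (-δ) * Real.Gamma (1 + δ) := by
    have := aux_conv (1 + δ) lam t (by linarith) hlam ht
    have heq : (∫ s in (0:ℝ)..t, Real.exp (-lam * (t - s)) * (t - s) ^ (1 + δ - 1))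
        = ∫ s in (0:ℝ)..t, Real.exp (-lam * (t - s)) * (t - s) ^ δ := by
      norm_num
    rw [heq] at this
    calc lam * (∫ s in (0:ℝ)..t, Real.exp (-lam * (t - s)) * (t - s) ^ δ)
        ≤ lam * (lam ^ (-(1 + δ)) * Real.Gamma (1 + δ)) := by
          exact mul_le_mul_of_nonneg_left this hlam.le
      _ = lam ^ (-δ) * Real.Gamma (1 + δ) := by
          rw [← mul_assoc]
          congr 1
          rw [show -(1 + δ) = -1 + -δ by ring, Real.rpow_add hlam, Real.rpow_neg_one,
            ← mul_assoc, mul_inv_cancel₀ hlam.ne', one_mul]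
  have h3 := aux_exp δ lam t hδ0 hδ1 hlam ht
  have := add_le_add (add_le_add h1 h2) h3
  linarith [this]
end

section
/- Let (X_i)_{i∈ℕ} be independent, identically distributed nonnegative real-valued random variables on a probability space (Ω, F, ℙ), and (λ_i)_{i∈ℕ} nonnegative reals with ℙ(Σ_i λ_i X_i < ∞) = 1. Suppose there exists 0 < α < 1 with ℙ(X₀ > t) ∈ O(t^{−α}) as t → ∞, and that Σ_i λ_i^{α} < ∞. Then ℙ(Σ_i λ_i X_i > t) ∈ O(t^{−α}) as t → ∞ (with implied constant proportional to Σ_i λ_i^{α}). -/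
open MeasureTheory ProbabilityTheory Filter Asymptotics

/-- polynomial (α < 1) tail decay transfers from i.i.d. nonnegative
summands to their weighted sum. -/
theorem stmt_12 {Ω : Type*} [MeasurableSpace Ω] (μ : Measure Ω) [IsProbabilityMeasure μ]
    (X : ℕ → Ω → ℝ) (hmeas : ∀ i, Measurable (X i))
    (hindep : iIndepFun X μ)
    (hident : ∀ i, IdentDistrib (X i) (X 0) μ μ)
    (hnn : ∀ i ω, 0 ≤ X i ω)
    (lam : ℕ → ℝ) (hlam : ∀ i, 0 ≤ lam i)
    (hconv : ∀ᵐ ω ∂μ, Summable fun i => lam i * X i ω)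
    (α : ℝ) (hα0 : 0 < α) (hα1 : α < 1)
    (htail : (fun t => (μ {ω | t < X 0 ω}).toReal) =O[atTop] fun t => t ^ (-α))
    (hsum : Summable fun i => lam i ^ α) :
    (fun t => (μ {ω | t < ∑' i, lam i * X i ω}).toReal) =O[atTop] fun t => t ^ (-α) := by
  -- Extract a uniform tail constant valid for all `s > 0`.
  obtain ⟨c, hc_pos, hc⟩ := htail.exists_pos
  rw [IsBigOWith] at hc
  obtain ⟨t₀', ht₀'⟩ := eventually_atTop.mp hc
  set t₀ : ℝ := max t₀' 1 with ht₀def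
  have ht₀1 : (1 : ℝ) ≤ t₀ := le_max_right _ _
  have ht₀0 : (0 : ℝ) < t₀ := lt_of_lt_of_le one_pos ht₀1
  set C : ℝ := max c (t₀ ^ α) with hCdef
  have hC_pos : 0 < C := lt_of_lt_of_le hc_pos (le_max_left _ _)
  have htail' : ∀ s : ℝ, 0 < s → μ {ω | s < X 0 ω} ≤ ENNReal.ofReal (C * s ^ (-α)) := by
    intro s hs
    have hsa : (0 : ℝ) ≤ s ^ (-α) := Real.rpow_nonneg hs.le _
    rcases le_or_gt t₀ s with h | h
    · have h1 := ht₀' s (le_trans (le_max_left _ _) h)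
      rw [Real.norm_eq_abs, Real.norm_eq_abs, abs_of_nonneg ENNReal.toReal_nonneg,
        abs_of_nonneg hsa] at h1
      have h2 : (μ {ω | s < X 0 ω}).toReal ≤ C * s ^ (-α) :=
        h1.trans (mul_le_mul_of_nonneg_right (le_max_left _ _) hsa)
      calc μ {ω | s < X 0 ω} = ENNReal.ofReal ((μ {ω | s < X 0 ω}).toReal) :=
            (ENNReal.ofReal_toReal (measure_ne_top μ _)).symm
        _ ≤ ENNReal.ofReal (C * s ^ (-α)) := ENNReal.ofReal_le_ofReal h2
    · have h1 : (1 : ℝ) ≤ C * s ^ (-α) := by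
        have hsle : s ^ α ≤ t₀ ^ α := Real.rpow_le_rpow hs.le h.le hα0.le
        have h2 : s ^ α * s ^ (-α) = 1 := by
          rw [← Real.rpow_add hs]; simp
        have h3 : (1 : ℝ) ≤ t₀ ^ α * s ^ (-α) := by
          rw [← h2]; exact mul_le_mul_of_nonneg_right hsle hsa
        exact h3.trans (mul_le_mul_of_nonneg_right (le_max_right _ _) hsa)
      calc μ {ω | s < X 0 ω} ≤ 1 := prob_le_one
        _ = ENNReal.ofReal 1 := by simp
        _ ≤ ENNReal.ofReal (C * s ^ (-α)) := ENNReal.ofReal_le_ofReal h1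
  -- Scaled tail bound for all summands.
  have htailS : ∀ (i : ℕ) (a s : ℝ), 0 ≤ a → 0 < s →
      μ {ω | s < a * X i ω} ≤ ENNReal.ofReal (C * a ^ α * s ^ (-α)) := by
    intro i a s ha hs
    rcases eq_or_lt_of_le ha with rfl | ha'
    · have : {ω | s < 0 * X i ω} = (∅ : Set Ω) := by
        apply Set.eq_empty_of_forall_notMem
        intro ω hω
        simp only [Set.mem_setOf_eq, zero_mul] at hω
        linarith
      rw [this]; simp
    · have hset : {ω | s < a * X i ω} = X i ⁻¹' Set.Ioi (s / a) := by
        ext ω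
        simp only [Set.mem_setOf_eq, Set.mem_preimage, Set.mem_Ioi, div_lt_iff₀ ha', mul_comm]
      rw [hset, (hident i).measure_mem_eq measurableSet_Ioi]
      have hsa : 0 < s / a := div_pos hs ha'
      refine le_trans (htail' _ hsa) (le_of_eq ?_)
      congr 1
      have h1 : (s / a) ^ (-α) = a ^ α * s ^ (-α) := by
        rw [Real.rpow_neg (div_nonneg hs.le ha'.le), Real.div_rpow hs.le ha'.le,
          Real.rpow_neg hs.le]
        field_simp
      rw [h1]; ring
  set Sα : ℝ := ∑' i, lam i ^ α with hSαdef
  have hSα0 : 0 ≤ Sα := tsum_nonneg fun i => Real.rpow_nonneg (hlam i) α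
  set K : ℝ := C * Sα * (1 + 1 / (1 - α)) with hKdef
  have h1α : (0 : ℝ) < 1 - α := by linarith
  have hK0 : 0 ≤ K := by
    apply mul_nonneg (mul_nonneg hC_pos.le hSα0)
    positivity
  -- the main bound, valid for every positive t
  have hmain : ∀ t : ℝ, 0 < t →
      μ {ω | t < ∑' i, lam i * X i ω} ≤ ENNReal.ofReal (K * t ^ (-α)) := by
    intro t ht
    set Z : ℕ → Ω → ENNReal := fun i ω => ENNReal.ofReal (lam i * X i ω) with hZdef
    set W : ℕ → Ω → ENNReal := fun i ω => min (Z i ω) (ENNReal.ofReal t) with hWdef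
    have hZm : ∀ i, Measurable (Z i) :=
      fun i => ENNReal.measurable_ofReal.comp ((hmeas i).const_mul _)
    have hWm : ∀ i, Measurable (W i) := fun i => (hZm i).min measurable_const
    have hFm : Measurable (fun ω => ∑' i, W i ω) := Measurable.ennreal_tsum hWm
    -- inclusion into the ENNReal-world event
    have hsub1 : {ω | t < ∑' i, lam i * X i ω} ⊆ {ω | ENNReal.ofReal t < ∑' i, Z i ω} := by
      intro ω hω
      simp only [Set.mem_setOf_eq] at hω ⊢
      by_cases hS : Summable fun i => lam i * X i ω
      · have h1 : ENNReal.ofReal (∑' i, lam i * X i ω) = ∑' i, Z i ω :=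
          ENNReal.ofReal_tsum_of_nonneg (fun i => mul_nonneg (hlam i) (hnn i ω)) hS
        rw [← h1]
        exact (ENNReal.ofReal_lt_ofReal_iff_of_nonneg ht.le).mpr hω
      · rw [tsum_eq_zero_of_not_summable hS] at hω; linarith
    -- splitting into big-jump part and truncated part
    have hsub2 : {ω | ENNReal.ofReal t < ∑' i, Z i ω} ⊆
        (⋃ i, {ω | t < lam i * X i ω}) ∪ {ω | ENNReal.ofReal t < ∑' i, W i ω} := by
      intro ω hω
      simp only [Set.mem_setOf_eq] at hω
      by_cases hb : ∃ i, t < lam i * X i ω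
      · left
        obtain ⟨i, hi⟩ := hb
        exact Set.mem_iUnion.mpr ⟨i, hi⟩
      · right
        push_neg at hb
        have hWZ : ∀ i, W i ω = Z i ω :=
          fun i => min_eq_left (ENNReal.ofReal_le_ofReal (hb i))
        simp only [Set.mem_setOf_eq]
        calc ENNReal.ofReal t < ∑' i, Z i ω := hω
          _ = ∑' i, W i ω := (tsum_congr hWZ).symm
    have hsplit : μ {ω | t < ∑' i, lam i * X i ω} ≤
        (∑' i, μ {ω | t < lam i * X i ω}) + μ {ω | ENNReal.ofReal t < ∑' i, W i ω} :=
      (measure_mono (hsub1.trans hsub2)).trans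
        ((measure_union_le _ _).trans (add_le_add (measure_iUnion_le _) le_rfl))
    -- first term
    have hsummable1 : Summable fun i => C * lam i ^ α * t ^ (-α) := by
      simpa [mul_assoc] using ((hsum.mul_left C).mul_right (t ^ (-α)))
    have hterm1 : (∑' i, μ {ω | t < lam i * X i ω}) ≤
        ENNReal.ofReal (C * Sα * t ^ (-α)) := by
      calc (∑' i, μ {ω | t < lam i * X i ω})
          ≤ ∑' i, ENNReal.ofReal (C * lam i ^ α * t ^ (-α)) :=
            ENNReal.tsum_le_tsum fun i => htailS i (lam i) t (hlam i) ht
        _ = ENNReal.ofReal (∑' i, C * lam i ^ α * t ^ (-α)) := by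
            refine (ENNReal.ofReal_tsum_of_nonneg (fun i => ?_) hsummable1).symm
            exact mul_nonneg (mul_nonneg hC_pos.le (Real.rpow_nonneg (hlam i) _))
              (Real.rpow_nonneg ht.le _)
        _ = ENNReal.ofReal (C * Sα * t ^ (-α)) := by
            congr 1
            rw [tsum_mul_right, tsum_mul_left]
    -- second term: truncated expectations
    have hWint : ∀ i, ∫⁻ ω, W i ω ∂μ ≤
        ENNReal.ofReal (C * lam i ^ α * (t ^ (1 - α) / (1 - α))) := by
      intro i
      have hg : ∀ ω, W i ω = ENNReal.ofReal (min (lam i * X i ω) t) := by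
        intro ω
        simp only [hWdef, hZdef]
        rcases le_total (lam i * X i ω) t with h | h
        · rw [min_eq_left h, min_eq_left (ENNReal.ofReal_le_ofReal h)]
        · rw [min_eq_right h, min_eq_right (ENNReal.ofReal_le_ofReal h)]
      have hmm : Measurable fun ω => min (lam i * X i ω) t :=
        ((hmeas i).const_mul _).min measurable_const
      have hln : ∫⁻ ω, W i ω ∂μ =
          ∫⁻ s in Set.Ioi (0 : ℝ), μ {ω | s < min (lam i * X i ω) t} := by
        simp_rw [hg]
        exact lintegral_eq_lintegral_meas_lt μ
          (Filter.Eventually.of_forall fun ω => le_min (mul_nonneg (hlam i) (hnn i ω)) ht.le)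
          hmm.aemeasurable
      have hintegrable : IntegrableOn (fun s : ℝ => C * lam i ^ α * s ^ (-α))
          (Set.Ioc 0 t) := by
        have h1 : IntervalIntegrable (fun s : ℝ => s ^ (-α)) volume 0 t :=
          intervalIntegral.intervalIntegrable_rpow' (by linarith)
        have h2 : IntegrableOn (fun s : ℝ => s ^ (-α)) (Set.Ioc 0 t) :=
          (intervalIntegrable_iff_integrableOn_Ioc_of_le ht.le).mp h1
        exact h2.const_mul _
      rw [hln]
      calc ∫⁻ s in Set.Ioi (0 : ℝ), μ {ω | s < min (lam i * X i ω) t}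
          ≤ ∫⁻ s in Set.Ioc (0 : ℝ) t, ENNReal.ofReal (C * lam i ^ α * s ^ (-α)) := by
            rw [← Set.Ioc_union_Ioi_eq_Ioi ht.le,
              lintegral_union measurableSet_Ioi (Set.Ioc_disjoint_Ioi le_rfl)]
            have hzero : ∫⁻ s in Set.Ioi t, μ {ω | s < min (lam i * X i ω) t} = 0 := by
              have hempty : ∀ s ∈ Set.Ioi t,
                  μ {ω | s < min (lam i * X i ω) t} = (fun _ : ℝ => (0 : ENNReal)) s := by
                intro s hs
                have h0 : {ω | s < min (lam i * X i ω) t} = (∅ : Set Ω) := by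
                  apply Set.eq_empty_of_forall_notMem
                  intro ω hω
                  simp only [Set.mem_setOf_eq] at hω
                  exact absurd (lt_of_lt_of_le hω (min_le_right _ _)) (not_lt.mpr hs.le)
                rw [h0]; simp
              rw [setLIntegral_congr_fun measurableSet_Ioi
                hempty]
              simp
            rw [hzero, add_zero]
            refine setLIntegral_mono' measurableSet_Ioc fun s hs => ?_
            refine le_trans (measure_mono fun ω (hω : s < min (lam i * X i ω) t) =>
              lt_of_lt_of_le hω (min_le_left _ _)) ?_
            exact htailS i (lam i) s (hlam i) hs.1
        _ = ENNReal.ofReal (∫ s in Set.Ioc (0 : ℝ) t, C * lam i ^ α * s ^ (-α)) := by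
            refine (ofReal_integral_eq_lintegral_ofReal hintegrable ?_).symm
            filter_upwards [ae_restrict_mem measurableSet_Ioc] with s hs
            exact mul_nonneg (mul_nonneg hC_pos.le (Real.rpow_nonneg (hlam i) _))
              (Real.rpow_nonneg hs.1.le _)
        _ = ENNReal.ofReal (C * lam i ^ α * (t ^ (1 - α) / (1 - α))) := by
            congr 1
            rw [MeasureTheory.integral_const_mul]
            congr 1
            rw [← intervalIntegral.integral_of_le ht.le,
              integral_rpow (Or.inl (by linarith : (-1 : ℝ) < -α)),
              Real.zero_rpow (by linarith : -α + 1 ≠ 0)]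
            rw [show -α + 1 = 1 - α by ring]
            ring
    have hsummable2 : Summable fun i => C * lam i ^ α * (t ^ (1 - α) / (1 - α)) := by
      simpa [mul_assoc] using ((hsum.mul_left C).mul_right (t ^ (1 - α) / (1 - α)))
    have hterm2 : μ {ω | ENNReal.ofReal t < ∑' i, W i ω} ≤
        ENNReal.ofReal (C * Sα / (1 - α) * t ^ (-α)) := by
      have hmar := mul_meas_ge_le_lintegral₀ (μ := μ) hFm.aemeasurable (ENNReal.ofReal t)
      have hne0 : ENNReal.ofReal t ≠ 0 := by
        simp [ENNReal.ofReal_eq_zero, not_le, ht]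
      have hdiv : μ {ω | ENNReal.ofReal t < ∑' i, W i ω} ≤
          (∫⁻ ω, ∑' i, W i ω ∂μ) / ENNReal.ofReal t := by
        refine le_trans (measure_mono fun ω (hω : ENNReal.ofReal t < _) => hω.le) ?_
        rw [ENNReal.le_div_iff_mul_le (Or.inl hne0) (Or.inl ENNReal.ofReal_ne_top)]
        rw [mul_comm]
        exact hmar
      have hint : (∫⁻ ω, ∑' i, W i ω ∂μ) ≤
          ENNReal.ofReal (C * Sα * (t ^ (1 - α) / (1 - α))) := by
        rw [lintegral_tsum fun i => (hWm i).aemeasurable]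
        calc (∑' i, ∫⁻ ω, W i ω ∂μ)
            ≤ ∑' i, ENNReal.ofReal (C * lam i ^ α * (t ^ (1 - α) / (1 - α))) :=
              ENNReal.tsum_le_tsum hWint
          _ = ENNReal.ofReal (∑' i, C * lam i ^ α * (t ^ (1 - α) / (1 - α))) := by
              refine (ENNReal.ofReal_tsum_of_nonneg (fun i => ?_) hsummable2).symm
              have := Real.rpow_nonneg ht.le (1 - α)
              exact mul_nonneg (mul_nonneg hC_pos.le (Real.rpow_nonneg (hlam i) _))
                (by positivity)
          _ = ENNReal.ofReal (C * Sα * (t ^ (1 - α) / (1 - α))) := by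
              congr 1
              rw [tsum_mul_right, tsum_mul_left]
      refine hdiv.trans ?_
      refine le_trans (ENNReal.div_le_div_right hint _) (le_of_eq ?_)
      rw [← ENNReal.ofReal_div_of_pos ht]
      congr 1
      have htne : t ≠ 0 := ne_of_gt ht
      have h1 : t ^ (1 - α) = t ^ (-α) * t := by
        rw [show (1 : ℝ) - α = -α + 1 by ring, Real.rpow_add ht, Real.rpow_one]
      rw [h1]
      field_simp
    refine hsplit.trans ?_
    refine le_trans (add_le_add hterm1 hterm2) (le_of_eq ?_)
    rw [← ENNReal.ofReal_add (by positivity)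
      (mul_nonneg (by positivity) (Real.rpow_nonneg ht.le _))]
    · congr 1
      rw [hKdef]
      field_simp
  -- conclude the asymptotic statement
  rw [isBigO_iff]
  refine ⟨K, ?_⟩
  filter_upwards [eventually_ge_atTop (1 : ℝ)] with t ht1
  have ht : (0 : ℝ) < t := lt_of_lt_of_le one_pos ht1
  rw [Real.norm_eq_abs, Real.norm_eq_abs, abs_of_nonneg ENNReal.toReal_nonneg,
    abs_of_nonneg (Real.rpow_nonneg ht.le _)]
  exact ENNReal.toReal_le_of_le_ofReal
    (mul_nonneg hK0 (Real.rpow_nonneg ht.le _)) (hmain t ht)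
end

section
/- Let (X_i)_{i∈ℕ} be independent, identically distributed nonnegative real-valued random variables on a probability space (Ω, F, ℙ), and (λ_i)_{i∈ℕ} nonnegative reals with ℙ(Σ_i λ_i X_i < ∞) = 1. Let α > 0, and suppose there exists 0 < β < 1 with Σ_i λ_i^{1−β} < ∞ and Σ_i λ_i^{αβ} < ∞. If ℙ(X₀ > t) ∈ O(t^{−α}) as t → ∞, then ℙ(Σ_i λ_i X_i > t) ∈ O(t^{−α}) as t → ∞ (with implied constant proportional to C_{α,β} = (Σ_i λ_i^{αβ})·(Σ_i λ_i^{1−β})^{α}). -/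
open MeasureTheory ProbabilityTheory Filter Asymptotics

/-- polynomial tail decay of arbitrary exponent `α > 0` transfers from
i.i.d. nonnegative summands to their weighted sum. -/
theorem stmt_13 {Ω : Type*} [MeasurableSpace Ω] (μ : Measure Ω) [IsProbabilityMeasure μ]
    (X : ℕ → Ω → ℝ) (hmeas : ∀ i, Measurable (X i))
    (hindep : iIndepFun X μ)
    (hident : ∀ i, IdentDistrib (X i) (X 0) μ μ)
    (hnn : ∀ i ω, 0 ≤ X i ω)
    (lam : ℕ → ℝ) (hlam : ∀ i, 0 ≤ lam i)
    (hconv : ∀ᵐ ω ∂μ, Summable fun i => lam i * X i ω)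
    (α β : ℝ) (hα : 0 < α) (hβ0 : 0 < β) (hβ1 : β < 1)
    (hsum1 : Summable fun i => lam i ^ (1 - β))
    (hsum2 : Summable fun i => lam i ^ (α * β))
    (htail : (fun t => (μ {ω | t < X 0 ω}).toReal) =O[atTop] fun t => t ^ (-α)) :
    (fun t => (μ {ω | t < ∑' i, lam i * X i ω}).toReal) =O[atTop] fun t => t ^ (-α) := by
  classical
  set A : ℝ := ∑' i, lam i ^ (1 - β) with hA_def
  have hβne : (1 : ℝ) - β ≠ 0 := by linarith
  have hterm_le : ∀ i, lam i ^ (1 - β) ≤ A :=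
    fun i => Summable.le_tsum hsum1 i (fun j _ => Real.rpow_nonneg (hlam j) _)
  have hA_nn : 0 ≤ A := tsum_nonneg fun i => Real.rpow_nonneg (hlam i) _
  by_cases hA0 : A = 0
  · -- degenerate case : all weights vanish
    have hlam0 : ∀ i, lam i = 0 := by
      intro i
      have h2 : lam i ^ (1 - β) = 0 :=
        le_antisymm (hA0 ▸ hterm_le i) (Real.rpow_nonneg (hlam i) _)
      rwa [Real.rpow_eq_zero (hlam i) hβne] at h2
    have hS : ∀ ω, (∑' i, lam i * X i ω) = 0 := by intro ω; simp [hlam0]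
    refine isBigO_iff.mpr ⟨0, ?_⟩
    filter_upwards [eventually_ge_atTop (1 : ℝ)] with t ht
    have hempty : {ω | t < ∑' i, lam i * X i ω} = ∅ := by
      ext ω; simp only [Set.mem_setOf_eq, Set.mem_empty_iff_false, iff_false, not_lt, hS ω]
      linarith
    simp [hempty]
  have hA_pos : 0 < A := lt_of_le_of_ne hA_nn (Ne.symm hA0)
  -- uniform bound on the weights
  set M : ℝ := A ^ (1 / (1 - β)) with hM_def
  have hM_pos : 0 < M := Real.rpow_pos_of_pos hA_pos _
  have hlamM : ∀ i, lam i ≤ M := by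
    intro i
    have h1 : lam i ^ (1 - β) ≤ A := hterm_le i
    have h2 : (lam i ^ (1 - β)) ^ (1 / (1 - β)) ≤ M :=
      Real.rpow_le_rpow (Real.rpow_nonneg (hlam i) _) h1
        (div_nonneg zero_le_one (by linarith))
    rwa [← Real.rpow_mul (hlam i), mul_one_div, div_self hβne, Real.rpow_one] at h2
  -- extract the tail constant
  obtain ⟨C, hC⟩ := isBigO_iff.mp htail
  obtain ⟨T, hT⟩ := eventually_atTop.mp hC
  set C' : ℝ := max C 0 with hC'_def
  have hC'nn : (0 : ℝ) ≤ C' := le_max_right _ _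
  have hT' : ∀ s : ℝ, max T 1 ≤ s → (μ {ω | s < X 0 ω}).toReal ≤ C' * s ^ (-α) := by
    intro s hs
    have hs1 : (1 : ℝ) ≤ s := le_trans (le_max_right _ _) hs
    have hspos : (0 : ℝ) < s := lt_of_lt_of_le one_pos hs1
    have h := hT s (le_trans (le_max_left _ _) hs)
    rw [Real.norm_eq_abs, Real.norm_eq_abs, abs_of_nonneg ENNReal.toReal_nonneg,
      abs_of_nonneg (Real.rpow_nonneg hspos.le _)] at h
    exact h.trans (mul_le_mul_of_nonneg_right (le_max_left _ _)
      (Real.rpow_nonneg hspos.le _))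
  set L : ℝ := ∑' i, lam i ^ (α * β) with hL_def
  have hL_nn : 0 ≤ L := tsum_nonneg fun i => Real.rpow_nonneg (hlam i) _
  set B : ℝ := A * M ^ β with hB_def
  have hB_pos : 0 < B := mul_pos hA_pos (Real.rpow_pos_of_pos hM_pos _)
  refine isBigO_iff.mpr ⟨C' * A ^ α * L, ?_⟩
  filter_upwards [eventually_ge_atTop (max 1 (max T 1 * B))] with t ht
  have ht1 : (1 : ℝ) ≤ t := le_trans (le_max_left _ _) ht
  have htpos : (0 : ℝ) < t := lt_of_lt_of_le one_pos ht1
  have htB : max T 1 * B ≤ t := le_trans (le_max_right _ _) ht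
  -- the key pointwise bound
  have key : (μ {ω | t < ∑' i, lam i * X i ω}).toReal ≤ C' * A ^ α * L * t ^ (-α) := by
    refine ENNReal.toReal_le_of_le_ofReal
      (mul_nonneg (mul_nonneg (mul_nonneg hC'nn (Real.rpow_nonneg hA_nn _)) hL_nn)
        (Real.rpow_nonneg htpos.le _)) ?_
    -- union bound inclusion
    have hincl : {ω | t < ∑' i, lam i * X i ω}
        ⊆ ⋃ i, {ω | lam i ^ (1 - β) / A * t < lam i * X i ω} := by
      intro ω hω
      by_contra hcon
      simp only [Set.mem_iUnion, not_exists, Set.mem_setOf_eq, not_lt] at hcon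
      have hle : (∑' i, lam i * X i ω) ≤ t := by
        by_cases hsumm : Summable (fun i => lam i * X i ω)
        · have h1 : Summable (fun i => lam i ^ (1 - β) / A * t) :=
            (hsum1.div_const A).mul_right t
          calc (∑' i, lam i * X i ω) ≤ ∑' i, lam i ^ (1 - β) / A * t :=
                Summable.tsum_le_tsum hcon hsumm h1
            _ = (∑' i, lam i ^ (1 - β)) / A * t := by
                rw [tsum_mul_right, tsum_div_const]
            _ = t := by rw [← hA_def, div_self hA0, one_mul]
        · rw [tsum_eq_zero_of_not_summable hsumm]; linarith
      exact absurd hω (not_lt.mpr hle)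
    calc μ {ω | t < ∑' i, lam i * X i ω}
        ≤ μ (⋃ i, {ω | lam i ^ (1 - β) / A * t < lam i * X i ω}) := measure_mono hincl
      _ ≤ ∑' i, μ {ω | lam i ^ (1 - β) / A * t < lam i * X i ω} := measure_iUnion_le _
      _ ≤ ∑' i, ENNReal.ofReal (C' * A ^ α * t ^ (-α) * lam i ^ (α * β)) := by
          refine ENNReal.tsum_le_tsum fun i => ?_
          rcases eq_or_lt_of_le (hlam i) with h0 | hpos
          · have : {ω | lam i ^ (1 - β) / A * t < lam i * X i ω} = ∅ := by
              ext ω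
              simp [← h0, Real.zero_rpow hβne]
            simp [this]
          · -- positive weight
            set s : ℝ := t / (A * lam i ^ β) with hs_def
            have hlb_pos : (0 : ℝ) < lam i ^ β := Real.rpow_pos_of_pos hpos _
            have hden_pos : (0 : ℝ) < A * lam i ^ β := mul_pos hA_pos hlb_pos
            have hspos : 0 < s := div_pos htpos hden_pos
            have hsT : max T 1 ≤ s := by
              rw [hs_def, le_div_iff₀ hden_pos]
              calc max T 1 * (A * lam i ^ β) ≤ max T 1 * B := by
                    refine mul_le_mul_of_nonneg_left ?_ (le_trans zero_le_one (le_max_right _ _))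
                    exact mul_le_mul_of_nonneg_left
                      (Real.rpow_le_rpow (hlam i) (hlamM i) hβ0.le) hA_pos.le
                _ ≤ t := htB
            have hsplit : lam i ^ (1 - β) * lam i ^ β = lam i := by
              rw [← Real.rpow_add hpos]; norm_num
            have hs_eq : lam i ^ (1 - β) / A * t / lam i = s := by
              rw [hs_def, div_eq_div_iff hpos.ne' hden_pos.ne']
              field_simp
              linear_combination hsplit
            have hset : {ω | lam i ^ (1 - β) / A * t < lam i * X i ω}
                = X i ⁻¹' Set.Ioi s := by
              ext ω
              simp only [Set.mem_setOf_eq, Set.mem_preimage, Set.mem_Ioi]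
              rw [mul_comm (lam i) (X i ω), ← div_lt_iff₀ hpos, hs_eq]
            have hmeq : μ (X i ⁻¹' Set.Ioi s) = μ (X 0 ⁻¹' Set.Ioi s) :=
              (hident i).measure_mem_eq measurableSet_Ioi
            have htailb : (μ (X 0 ⁻¹' Set.Ioi s)).toReal ≤ C' * s ^ (-α) := by
              have := hT' s hsT
              simpa [Set.preimage, Set.Ioi] using this
            have h1 : s ^ (-α) = t ^ (-α) * (A * lam i ^ β) ^ α := by
              rw [hs_def, div_eq_mul_inv,
                Real.mul_rpow htpos.le (inv_nonneg.mpr hden_pos.le),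
                Real.inv_rpow hden_pos.le, Real.rpow_neg hden_pos.le, inv_inv]
            have h2 : (A * lam i ^ β) ^ α = A ^ α * lam i ^ (α * β) := by
              rw [Real.mul_rpow hA_pos.le hlb_pos.le, ← Real.rpow_mul (hlam i), mul_comm β α]
            have hsval : C' * s ^ (-α) = C' * A ^ α * t ^ (-α) * lam i ^ (α * β) := by
              rw [h1, h2]; ring
            rw [hset, hmeq]
            have hfin : μ (X 0 ⁻¹' Set.Ioi s) ≠ ⊤ := measure_ne_top μ _
            rw [← ENNReal.ofReal_toReal hfin]
            exact ENNReal.ofReal_le_ofReal (htailb.trans_eq hsval)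
      _ = ENNReal.ofReal (∑' i, C' * A ^ α * t ^ (-α) * lam i ^ (α * β)) := by
          rw [ENNReal.ofReal_tsum_of_nonneg (fun i =>
            mul_nonneg (mul_nonneg (mul_nonneg hC'nn (Real.rpow_nonneg hA_nn _))
              (Real.rpow_nonneg htpos.le _)) (Real.rpow_nonneg (hlam i) _))
            (hsum2.mul_left _)]
      _ = ENNReal.ofReal (C' * A ^ α * L * t ^ (-α)) := by
          rw [tsum_mul_left, ← hL_def]; ring_nf
  rw [Real.norm_eq_abs, Real.norm_eq_abs, abs_of_nonneg ENNReal.toReal_nonneg,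
    abs_of_nonneg (Real.rpow_nonneg htpos.le _)]
  exact key
end

section
/- Let (X_i)_{i∈ℕ} be independent, identically distributed nonnegative real-valued random variables on a probability space (Ω, F, ℙ), and (λ_i)_{i∈ℕ} nonnegative reals with ℙ(Σ_i λ_i X_i < ∞) = 1. Let α, k > 0, and suppose there exists 0 < β < 1 with Σ_i λ_i^{1−β} < ∞ and Σ_i λ_i^{αβ} < ∞. If ℙ(X₀ > t) ∈ O(exp(−t^{α}/k)) as t → ∞, then ℙ(Σ_i λ_i X_i > t) ∈ O(exp(−C_{α,β}^{−1}·t^{α}/k)) as t → ∞, where C_{α,β} = (Σ_i λ_i^{αβ})·(Σ_i λ_i^{1−β})^{α}. -/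
open MeasureTheory ProbabilityTheory Filter Asymptotics

/-- stretched-exponential tail decay transfers from i.i.d. nonnegative
summands to their weighted sum, with loss factor
`C_{α,β} = (Σ λ_i^{αβ})·(Σ λ_i^{1-β})^α` in the exponent. -/
theorem stmt_14 {Ω : Type*} [MeasurableSpace Ω] (μ : Measure Ω) [IsProbabilityMeasure μ]
    (X : ℕ → Ω → ℝ) (hmeas : ∀ i, Measurable (X i))
    (hindep : iIndepFun X μ)
    (hident : ∀ i, IdentDistrib (X i) (X 0) μ μ)
    (hnn : ∀ i ω, 0 ≤ X i ω)
    (lam : ℕ → ℝ) (hlam : ∀ i, 0 ≤ lam i)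
    (hconv : ∀ᵐ ω ∂μ, Summable fun i => lam i * X i ω)
    (α k β : ℝ) (hα : 0 < α) (hk : 0 < k) (hβ0 : 0 < β) (hβ1 : β < 1)
    (hsum1 : Summable fun i => lam i ^ (1 - β))
    (hsum2 : Summable fun i => lam i ^ (α * β))
    (htail : (fun t => (μ {ω | t < X 0 ω}).toReal) =O[atTop]
      fun t => Real.exp (-(t ^ α / k))) :
    (fun t => (μ {ω | t < ∑' i, lam i * X i ω}).toReal) =O[atTop]
      fun t => Real.exp (-(((∑' i, lam i ^ (α * β)) * (∑' i, lam i ^ (1 - β)) ^ α)⁻¹ *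
        t ^ α / k)) := by
  by_cases hall : ∀ i, lam i = 0
  · -- trivial case: all weights vanish
    rw [isBigO_iff]
    refine ⟨1, ?_⟩
    rw [eventually_atTop]
    refine ⟨0, fun t ht => ?_⟩
    have hset : {ω | t < ∑' i, lam i * X i ω} = (∅ : Set Ω) := by
      ext ω
      simp only [Set.mem_setOf_eq, Set.mem_empty_iff_false, iff_false, not_lt]
      have h0 : (fun i => lam i * X i ω) = fun _ => (0 : ℝ) := by
        funext i; rw [hall i]; ring
      rw [h0, tsum_zero]; exact ht
    rw [hset]
    simp only [measure_empty, ENNReal.toReal_zero, norm_zero, one_mul]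
    positivity
  · push_neg at hall
    obtain ⟨j, hj⟩ := hall
    have hjpos : 0 < lam j := (hlam j).lt_of_ne (Ne.symm hj)
    set S : ℝ := ∑' i, lam i ^ (1 - β) with hSdef
    set T : ℝ := ∑' i, lam i ^ (α * β) with hTdef
    have hβ' : (0:ℝ) < 1 - β := by linarith
    have hSpos : 0 < S := by
      have h1 : (0:ℝ) < lam j ^ (1 - β) := Real.rpow_pos_of_pos hjpos _
      have h2 : lam j ^ (1 - β) ≤ S :=
        Summable.le_tsum hsum1 j (fun i _ => Real.rpow_nonneg (hlam i) _)
      linarith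
    have hTpos : 0 < T := by
      have h1 : (0:ℝ) < lam j ^ (α * β) := Real.rpow_pos_of_pos hjpos _
      have h2 : lam j ^ (α * β) ≤ T :=
        Summable.le_tsum hsum2 j (fun i _ => Real.rpow_nonneg (hlam i) _)
      linarith
    -- uniform bound on the weights
    set M : ℝ := S ^ (1 - β)⁻¹ with hMdef
    have hMpos : 0 < M := Real.rpow_pos_of_pos hSpos _
    have hlamM : ∀ i, lam i ≤ M := by
      intro i
      have h1 : lam i ^ (1 - β) ≤ S :=
        Summable.le_tsum hsum1 i (fun i' _ => Real.rpow_nonneg (hlam i') _)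
      have h2 : (lam i ^ (1 - β)) ^ (1 - β)⁻¹ ≤ M :=
        Real.rpow_le_rpow (Real.rpow_nonneg (hlam i) _) h1 (by positivity)
      rwa [← Real.rpow_mul (hlam i), mul_inv_cancel₀ (ne_of_gt hβ'),
        Real.rpow_one] at h2
    -- extract the tail bound
    rw [isBigO_iff] at htail
    obtain ⟨c, hc⟩ := htail
    rw [eventually_atTop] at hc
    obtain ⟨t₀, ht₀⟩ := hc
    set C : ℝ := max c 0 with hCdef
    have hC0 : 0 ≤ C := le_max_right _ _
    have htail' : ∀ s : ℝ, t₀ ≤ s →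
        (μ {ω | s < X 0 ω}).toReal ≤ C * Real.exp (-(s ^ α / k)) := by
      intro s hs
      have h := ht₀ s hs
      rw [Real.norm_eq_abs, Real.norm_eq_abs, abs_of_nonneg ENNReal.toReal_nonneg,
        abs_of_pos (Real.exp_pos _)] at h
      calc (μ {ω | s < X 0 ω}).toReal ≤ c * Real.exp (-(s ^ α / k)) := h
        _ ≤ C * Real.exp (-(s ^ α / k)) :=
          mul_le_mul_of_nonneg_right (le_max_left _ _) (Real.exp_pos _).le
    -- the threshold
    set t₁ : ℝ := max 1 (t₀ * S * M ^ β) with ht₁def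
    have ht₁pos : (0:ℝ) < t₁ := lt_of_lt_of_le one_pos (le_max_left _ _)
    set v₁ : ℝ := (t₁ / S) ^ α / k with hv₁def
    have hv₁pos : 0 < v₁ := by
      have : 0 < t₁ / S := div_pos ht₁pos hSpos
      positivity
    rw [isBigO_iff]
    refine ⟨C * Real.exp (T⁻¹ * v₁) / v₁ * T, ?_⟩
    rw [eventually_atTop]
    refine ⟨t₁, fun t ht => ?_⟩
    have htpos : 0 < t := lt_of_lt_of_le ht₁pos ht
    set v : ℝ := (t / S) ^ α / k with hvdef
    have hv₁v : v₁ ≤ v := by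
      have h1 : t₁ / S ≤ t / S := by
        apply div_le_div_of_nonneg_right ht hSpos.le
      have h2 : (t₁ / S) ^ α ≤ (t / S) ^ α :=
        Real.rpow_le_rpow (div_nonneg ht₁pos.le hSpos.le) h1 hα.le
      exact div_le_div_of_nonneg_right h2 hk.le
    have hvpos : 0 < v := lt_of_lt_of_le hv₁pos hv₁v
    -- union bound inclusion
    set A : ℕ → Set Ω := fun i => {ω | lam i ^ (1 - β) * (t / S) < lam i * X i ω}
      with hAdef
    have hincl : {ω | t < ∑' i, lam i * X i ω} ⊆ ⋃ i, A i := by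
      intro ω hω
      simp only [Set.mem_setOf_eq] at hω
      by_contra hnot
      simp only [Set.mem_iUnion, not_exists, hAdef, Set.mem_setOf_eq, not_lt] at hnot
      by_cases hsumm : Summable fun i => lam i * X i ω
      · have hle : ∑' i, lam i * X i ω ≤ ∑' i, lam i ^ (1 - β) * (t / S) :=
          Summable.tsum_le_tsum hnot hsumm (hsum1.mul_right _)
        rw [tsum_mul_right] at hle
        rw [← hSdef] at hle
        have : S * (t / S) = t := by field_simp
        rw [this] at hle
        linarith
      · rw [tsum_eq_zero_of_not_summable hsumm] at hω
        linarith
    -- per-index bound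
    set q : ℕ → ℝ := fun i =>
      C * Real.exp (T⁻¹ * v₁) / v₁ * Real.exp (-(v / T)) * lam i ^ (α * β)
      with hqdef
    have hqnonneg : ∀ i, 0 ≤ q i := by
      intro i
      have := Real.rpow_nonneg (hlam i) (α * β)
      have := (Real.exp_pos (T⁻¹ * v₁)).le
      have := (Real.exp_pos (-(v / T))).le
      positivity
    have hqsumm : Summable q := (hsum2.mul_left _)
    have hAq : ∀ i, μ (A i) ≤ ENNReal.ofReal (q i) := by
      intro i
      rcases eq_or_lt_of_le (hlam i) with hzero | hpos
      · -- lam i = 0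
        have hempty : A i = ∅ := by
          ext ω
          simp only [hAdef, Set.mem_setOf_eq, Set.mem_empty_iff_false, iff_false, not_lt,
            ← hzero, zero_mul]
          rw [Real.zero_rpow (ne_of_gt hβ')]
          simp
        rw [hempty, measure_empty]
        exact zero_le
      · -- lam i > 0
        set d : ℝ := lam i ^ (-β) * (t / S) with hddef
        have hdA : A i = X i ⁻¹' Set.Ioi d := by
          ext ω
          simp only [hAdef, Set.mem_setOf_eq, Set.mem_preimage, Set.mem_Ioi, hddef]
          constructor
          · intro h
            have h2 : lam i * (lam i ^ (-β) * (t / S)) < lam i * X i ω := by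
              have : lam i * (lam i ^ (-β) * (t / S)) = lam i ^ (1 - β) * (t / S) := by
                rw [show (1 : ℝ) - β = 1 + (-β) by ring, Real.rpow_add hpos,
                  Real.rpow_one]
                ring
              rw [this]; exact h
            exact lt_of_mul_lt_mul_left h2 hpos.le
          · intro h
            have h2 : lam i * (lam i ^ (-β) * (t / S)) < lam i * X i ω :=
              (mul_lt_mul_iff_right₀ hpos).mpr h
            have : lam i * (lam i ^ (-β) * (t / S)) = lam i ^ (1 - β) * (t / S) := by
              rw [show (1 : ℝ) - β = 1 + (-β) by ring, Real.rpow_add hpos,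
                Real.rpow_one]
              ring
            rwa [this] at h2
        have hmeq : μ (A i) = μ {ω | d < X 0 ω} := by
          rw [hdA]
          have := (hident i).measure_mem_eq (measurableSet_Ioi (a := d))
          simpa [Set.preimage, Set.mem_Ioi] using this
        -- d is beyond the threshold t₀
        have hd_ge : t₀ ≤ d := by
          have hMβpos : (0:ℝ) < M ^ β := Real.rpow_pos_of_pos hMpos _
          have h1 : M ^ (-β) ≤ lam i ^ (-β) :=
            Real.rpow_le_rpow_of_nonpos hpos (hlamM i) (by linarith)
          have h2 : t₀ * M ^ β ≤ t / S := by
            rw [le_div_iff₀ hSpos]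
            calc t₀ * M ^ β * S ≤ t₁ := by
                  have : t₀ * S * M ^ β ≤ t₁ := le_max_right _ _
                  linarith [this]
              _ ≤ t := ht
          have h3 : M ^ (-β) * (t₀ * M ^ β) ≤ M ^ (-β) * (t / S) :=
            mul_le_mul_of_nonneg_left h2 (Real.rpow_nonneg hMpos.le _)
          have h4 : M ^ (-β) * (t₀ * M ^ β) = t₀ := by
            rw [Real.rpow_neg hMpos.le]
            field_simp
          have h5 : M ^ (-β) * (t / S) ≤ lam i ^ (-β) * (t / S) :=
            mul_le_mul_of_nonneg_right h1 (div_nonneg htpos.le hSpos.le)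
          rw [hddef]; linarith
        -- apply the tail bound at d
        have hbound1 : (μ (A i)).toReal ≤ C * Real.exp (-(d ^ α / k)) := by
          rw [hmeq]; exact htail' d hd_ge
        -- rewrite the exponent
        set w : ℝ := lam i ^ (α * β) with hwdef
        have hwpos : 0 < w := Real.rpow_pos_of_pos hpos _
        have hdα : d ^ α / k = w⁻¹ * v := by
          rw [hddef, Real.mul_rpow (Real.rpow_nonneg (hlam i) _)
            (div_nonneg htpos.le hSpos.le), ← Real.rpow_mul (hlam i)]
          rw [show -β * α = -(α * β) by ring, Real.rpow_neg (hlam i), ← hwdef, hvdef]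
          ring
        have hwT : w ≤ T :=
          Summable.le_tsum hsum2 i (fun i' _ => Real.rpow_nonneg (hlam i') _)
        -- key exponential estimate
        have hkey : Real.exp (-(w⁻¹ * v)) ≤
            Real.exp (T⁻¹ * v₁) / v₁ * Real.exp (-(v / T)) * w := by
          have hinv : T⁻¹ ≤ w⁻¹ := inv_anti₀ hwpos hwT
          have e1 : Real.exp (-(w⁻¹ * v)) =
              Real.exp (-(v / T)) * Real.exp ((T⁻¹ - w⁻¹) * v) := by
            rw [← Real.exp_add]; congr 1; field_simp; ring
          have e2 : (T⁻¹ - w⁻¹) * v ≤ (T⁻¹ - w⁻¹) * v₁ :=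
            mul_le_mul_of_nonpos_left hv₁v (by linarith)
          have e3 : Real.exp ((T⁻¹ - w⁻¹) * v₁) =
              Real.exp (T⁻¹ * v₁) * Real.exp (-(w⁻¹ * v₁)) := by
            rw [← Real.exp_add]; congr 1; ring
          have e4 : Real.exp (-(w⁻¹ * v₁)) ≤ w / v₁ := by
            have hx : 0 < w⁻¹ * v₁ := mul_pos (inv_pos.mpr hwpos) hv₁pos
            have hxe : w⁻¹ * v₁ ≤ Real.exp (w⁻¹ * v₁) := by
              have := Real.add_one_le_exp (w⁻¹ * v₁); linarith
            have : (Real.exp (w⁻¹ * v₁))⁻¹ ≤ (w⁻¹ * v₁)⁻¹ :=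
              inv_anti₀ hx hxe
            rw [Real.exp_neg]
            calc (Real.exp (w⁻¹ * v₁))⁻¹ ≤ (w⁻¹ * v₁)⁻¹ := this
              _ = w / v₁ := by rw [mul_inv, inv_inv]; ring
          calc Real.exp (-(w⁻¹ * v))
              = Real.exp (-(v / T)) * Real.exp ((T⁻¹ - w⁻¹) * v) := e1
            _ ≤ Real.exp (-(v / T)) * Real.exp ((T⁻¹ - w⁻¹) * v₁) := by
                exact mul_le_mul_of_nonneg_left (Real.exp_le_exp.mpr e2)
                  (Real.exp_pos _).le
            _ = Real.exp (-(v / T)) * (Real.exp (T⁻¹ * v₁) * Real.exp (-(w⁻¹ * v₁))) := by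
                rw [e3]
            _ ≤ Real.exp (-(v / T)) * (Real.exp (T⁻¹ * v₁) * (w / v₁)) := by
                apply mul_le_mul_of_nonneg_left _ (Real.exp_pos _).le
                exact mul_le_mul_of_nonneg_left e4 (Real.exp_pos _).le
            _ = Real.exp (T⁻¹ * v₁) / v₁ * Real.exp (-(v / T)) * w := by ring
        have hfinal : (μ (A i)).toReal ≤ q i := by
          rw [hqdef]
          calc (μ (A i)).toReal ≤ C * Real.exp (-(d ^ α / k)) := hbound1
            _ = C * Real.exp (-(w⁻¹ * v)) := by rw [hdα]
            _ ≤ C * (Real.exp (T⁻¹ * v₁) / v₁ * Real.exp (-(v / T)) * w) :=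
                mul_le_mul_of_nonneg_left hkey hC0
            _ = C * Real.exp (T⁻¹ * v₁) / v₁ * Real.exp (-(v / T)) * w := by ring
        rw [ENNReal.le_ofReal_iff_toReal_le (measure_ne_top μ _) (hqnonneg i)]
        exact hfinal
    -- combine: union bound and summation
    have hμbound : (μ {ω | t < ∑' i, lam i * X i ω}).toReal ≤
        C * Real.exp (T⁻¹ * v₁) / v₁ * Real.exp (-(v / T)) * T := by
      have h1 : μ {ω | t < ∑' i, lam i * X i ω} ≤ ∑' i, μ (A i) :=
        le_trans (measure_mono hincl) (measure_iUnion_le _)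
      have h2 : ∑' i, μ (A i) ≤ ∑' i, ENNReal.ofReal (q i) :=
        ENNReal.tsum_le_tsum hAq
      have h3 : ∑' i, ENNReal.ofReal (q i) = ENNReal.ofReal (∑' i, q i) :=
        (ENNReal.ofReal_tsum_of_nonneg hqnonneg hqsumm).symm
      have h4 : ∑' i, q i = C * Real.exp (T⁻¹ * v₁) / v₁ * Real.exp (-(v / T)) * T := by
        rw [hqdef, tsum_mul_left, ← hTdef]
      have h5 : μ {ω | t < ∑' i, lam i * X i ω} ≤
          ENNReal.ofReal (C * Real.exp (T⁻¹ * v₁) / v₁ * Real.exp (-(v / T)) * T) := by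
        rw [← h4, ← h3]
        exact le_trans h1 h2
      apply ENNReal.toReal_le_of_le_ofReal _ h5
      have := (Real.exp_pos (T⁻¹ * v₁)).le
      have := (Real.exp_pos (-(v / T))).le
      positivity
    -- identify the exponent
    have hexp : v / T = (T * S ^ α)⁻¹ * t ^ α / k := by
      rw [hvdef, Real.div_rpow htpos.le hSpos.le, mul_inv]
      ring
    rw [Real.norm_eq_abs, Real.norm_eq_abs, abs_of_nonneg ENNReal.toReal_nonneg,
      abs_of_pos (Real.exp_pos _)]
    calc (μ {ω | t < ∑' i, lam i * X i ω}).toReal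
        ≤ C * Real.exp (T⁻¹ * v₁) / v₁ * Real.exp (-(v / T)) * T := hμbound
      _ = C * Real.exp (T⁻¹ * v₁) / v₁ * T *
          Real.exp (-((T * S ^ α)⁻¹ * t ^ α / k)) := by rw [hexp]; ring
end

section
/- Let B be a separable Banach space with its Borel σ-algebra, (Ω, F, ℙ) a probability space, H ∈ (0,1], and X : [0,1] × Ω → B a stochastic process such that almost surely t ↦ X(t) is continuous on [0,1] with X(0) = 0, and such that for all 0 ≤ s ≤ t ≤ 1 the B-valued random variables X(t) − X(s) and (t−s)^{H}·X(1) are identically distributed. Suppose α, k > 0 and ℙ(‖X(1)‖_B > b) ∈ O(exp(−b^{α}/k)) as b → ∞. Then for every 0 < η < H, ℙ( sup_{0 ≤ s < t ≤ 1} ‖X(t) − X(s)‖_B / (t−s)^{η} > b ) ∈ O(exp(−K_η^{−α}·b^{α}/k)) as b → ∞, where K_η = 4/((2^{η} − 1)(2^{1−η} − 1)). -/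
open MeasureTheory ProbabilityTheory Filter Asymptotics Finset
open scoped ENNReal

private lemma pow_rpow_comm {x : ℝ} (hx : 0 ≤ x) (n : ℕ) (p : ℝ) :
    (x ^ n) ^ p = (x ^ p) ^ n := by
  rw [← Real.rpow_natCast x n, ← Real.rpow_natCast (x ^ p) n,
    ← Real.rpow_mul hx, ← Real.rpow_mul hx, mul_comm]

private lemma dyadic_chain {B : Type*} [NormedAddCommGroup B] {f : ℝ → B} {c η : ℝ}
    (hdy : ∀ n j : ℕ, j < 2 ^ n →
      ‖f (((j : ℝ) + 1) / 2 ^ n) - f ((j : ℝ) / 2 ^ n)‖ ≤ c * ((1 / 2 : ℝ) ^ n) ^ η)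
    (n : ℕ) : ∀ d a : ℕ, a + d ≤ 2 ^ n →
      ‖f (((a + d : ℕ) : ℝ) / 2 ^ n) - f ((a : ℝ) / 2 ^ n)‖
        ≤ (d : ℝ) * (c * ((1 / 2 : ℝ) ^ n) ^ η) := by
  intro d
  induction d with
  | zero => intro a _; simp
  | succ d ih =>
    intro a ha
    have h1 := hdy n (a + d) (by omega)
    have h2 := ih a (by omega)
    have key : ‖f (((a + (d + 1) : ℕ) : ℝ) / 2 ^ n) - f ((a : ℝ) / 2 ^ n)‖
        ≤ ‖f ((((a + d : ℕ) : ℝ) + 1) / 2 ^ n) - f (((a + d : ℕ) : ℝ) / 2 ^ n)‖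
          + ‖f (((a + d : ℕ) : ℝ) / 2 ^ n) - f ((a : ℝ) / 2 ^ n)‖ := by
      have e : ((a + (d + 1) : ℕ) : ℝ) = ((a + d : ℕ) : ℝ) + 1 := by push_cast; ring
      rw [e]
      have := dist_triangle (f ((((a + d : ℕ) : ℝ) + 1) / 2 ^ n))
        (f (((a + d : ℕ) : ℝ) / 2 ^ n)) (f ((a : ℝ) / 2 ^ n))
      simpa [dist_eq_norm] using this
    calc _ ≤ _ := key
      _ ≤ c * ((1 / 2 : ℝ) ^ n) ^ η + (d : ℝ) * (c * ((1 / 2 : ℝ) ^ n) ^ η) := add_le_add h1 h2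
      _ = ((d + 1 : ℕ) : ℝ) * (c * ((1 / 2 : ℝ) ^ n) ^ η) := by push_cast; ring

private lemma dyadic_approx {B : Type*} [NormedAddCommGroup B] {f : ℝ → B} {c η : ℝ}
    (hf : ContinuousOn f (Set.Icc 0 1)) (hη0 : 0 < η) (hc : 0 ≤ c)
    (hdy : ∀ n j : ℕ, j < 2 ^ n →
      ‖f (((j : ℝ) + 1) / 2 ^ n) - f ((j : ℝ) / 2 ^ n)‖ ≤ c * ((1 / 2 : ℝ) ^ n) ^ η)
    {t : ℝ} (ht0 : 0 ≤ t) (ht1 : t ≤ 1) (n : ℕ) :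
    ‖f t - f ((⌊t * 2 ^ n⌋₊ : ℝ) / 2 ^ n)‖
      ≤ c * ((1 / 2 : ℝ) ^ η) ^ (n + 1) * (1 - (1 / 2 : ℝ) ^ η)⁻¹ := by
  set r : ℝ := (1 / 2 : ℝ) ^ η with hr
  have hr0 : 0 < r := Real.rpow_pos_of_pos (by norm_num) _
  have hr1 : r < 1 := Real.rpow_lt_one (by norm_num) (by norm_num) hη0
  set g : ℕ → ℝ := fun m => (⌊t * 2 ^ m⌋₊ : ℝ) / 2 ^ m with hg
  have hg_le : ∀ m, g m ≤ t := by
    intro m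
    rw [hg, div_le_iff₀ (by positivity)]
    exact Nat.floor_le (by positivity)
  have hg_lt : ∀ m, t - (1 / 2 : ℝ) ^ m < g m := by
    intro m
    have := Nat.lt_floor_add_one (t * 2 ^ m)
    rw [hg, sub_lt_iff_lt_add, div_add' _ _ _ (by positivity), lt_div_iff₀ (by positivity)]
    calc t * 2 ^ m < (⌊t * 2 ^ m⌋₊ : ℝ) + 1 := this
      _ = (⌊t * 2 ^ m⌋₊ : ℝ) + (1 / 2 : ℝ) ^ m * 2 ^ m := by
          rw [one_div, inv_pow, inv_mul_cancel₀ (by positivity)]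
  have hg_mem : ∀ m, g m ∈ Set.Icc (0 : ℝ) 1 := by
    intro m
    exact ⟨by positivity, (hg_le m).trans ht1⟩
  -- step bound
  have hstep : ∀ m : ℕ, ‖f (g (m + 1)) - f (g m)‖ ≤ c * r ^ (m + 1) := by
    intro m
    set a := ⌊t * 2 ^ m⌋₊ with hadef
    set b := ⌊t * 2 ^ (m + 1)⌋₊ with hbdef
    have h2a : 2 * a ≤ b := by
      rw [hbdef]
      apply Nat.le_floor
      push_cast
      calc (2 * a : ℝ) = 2 * (a : ℝ) := by push_cast; ring
        _ ≤ 2 * (t * 2 ^ m) := by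
            have := Nat.floor_le (show (0:ℝ) ≤ t * 2 ^ m by positivity)
            nlinarith
        _ = t * 2 ^ (m + 1) := by ring
    have hb : b ≤ 2 * a + 1 := by
      have h1 : t * 2 ^ (m + 1) < 2 * (a : ℝ) + 2 := by
        have h := Nat.lt_floor_add_one (t * 2 ^ m)
        have hp : t * 2 ^ (m + 1) = 2 * (t * 2 ^ m) := by ring
        rw [hp, hadef]
        linarith
      have h2 : (b : ℝ) ≤ t * 2 ^ (m + 1) := Nat.floor_le (by positivity)
      have h3 : (b : ℝ) < ((2 * a + 2 : ℕ) : ℝ) := by push_cast; linarith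
      have h4 : b < 2 * a + 2 := by exact_mod_cast h3
      omega
    have hble : b ≤ 2 ^ (m + 1) := by
      rw [hbdef]
      apply Nat.floor_le_of_le
      push_cast
      nlinarith [pow_nonneg (show (0:ℝ) ≤ 2 by norm_num) (m + 1)]
    have := dyadic_chain hdy (m + 1) (b - 2 * a) (2 * a) (by omega)
    have e1 : ((2 * a + (b - 2 * a) : ℕ) : ℝ) = (b : ℝ) := by
      have : 2 * a + (b - 2 * a) = b := by omega
      rw [this]
    rw [e1] at this
    have e2 : ((2 * a : ℕ) : ℝ) / 2 ^ (m + 1) = (a : ℝ) / 2 ^ m := by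
      push_cast; ring
    rw [e2] at this
    have hd1 : ((b - 2 * a : ℕ) : ℝ) ≤ 1 := by
      have : b - 2 * a ≤ 1 := by omega
      exact_mod_cast this
    have hnn : 0 ≤ c * ((1 / 2 : ℝ) ^ (m + 1)) ^ η := by positivity
    calc ‖f (g (m + 1)) - f (g m)‖
        = ‖f ((b : ℝ) / 2 ^ (m + 1)) - f ((a : ℝ) / 2 ^ m)‖ := rfl
      _ ≤ ((b - 2 * a : ℕ) : ℝ) * (c * ((1 / 2 : ℝ) ^ (m + 1)) ^ η) := this
      _ ≤ 1 * (c * ((1 / 2 : ℝ) ^ (m + 1)) ^ η) := by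
          apply mul_le_mul_of_nonneg_right hd1 hnn
      _ = c * r ^ (m + 1) := by
          rw [one_mul, pow_rpow_comm (by norm_num : (0:ℝ) ≤ 1/2) (m+1) η]
  -- chain bound
  have hchain : ∀ m : ℕ, ‖f (g (n + m)) - f (g n)‖ ≤ c * r ^ (n + 1) * (1 - r)⁻¹ := by
    intro m
    have hsum : ‖f (g (n + m)) - f (g n)‖ ≤ c * r ^ (n + 1) * ∑ i ∈ range m, r ^ i := by
      induction m with
      | zero => simp
      | succ m ih =>
        have h1 := hstep (n + m)
        have key : ‖f (g (n + (m + 1))) - f (g n)‖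
            ≤ ‖f (g (n + m + 1)) - f (g (n + m))‖ + ‖f (g (n + m)) - f (g n)‖ := by
          have e : n + (m + 1) = n + m + 1 := by omega
          rw [e]
          have := dist_triangle (f (g (n + m + 1))) (f (g (n + m))) (f (g n))
          simpa [dist_eq_norm] using this
        calc ‖f (g (n + (m + 1))) - f (g n)‖
            ≤ ‖f (g (n + m + 1)) - f (g (n + m))‖ + ‖f (g (n + m)) - f (g n)‖ := key
          _ ≤ c * r ^ (n + m + 1) + c * r ^ (n + 1) * ∑ i ∈ range m, r ^ i :=
              add_le_add h1 ih
          _ = c * r ^ (n + 1) * ∑ i ∈ range (m + 1), r ^ i := by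
              rw [Finset.sum_range_succ]
              ring
    calc ‖f (g (n + m)) - f (g n)‖ ≤ c * r ^ (n + 1) * ∑ i ∈ range m, r ^ i := hsum
      _ ≤ c * r ^ (n + 1) * (1 - r)⁻¹ := by
          apply mul_le_mul_of_nonneg_left _ (by positivity)
          calc (∑ i ∈ range m, r ^ i) ≤ ∑' i : ℕ, r ^ i :=
              Summable.sum_le_tsum _ (fun i _ => by positivity)
                (summable_geometric_of_lt_one hr0.le hr1)
            _ = (1 - r)⁻¹ := tsum_geometric_of_lt_one hr0.le hr1
  -- limit
  have hlim : Tendsto (fun m => f (g (n + m))) atTop (nhds (f t)) := by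
    have htend : Tendsto (fun m => g (n + m)) atTop (nhds t) := by
      have hb : ∀ m : ℕ, |g (n + m) - t| ≤ (1 / 2 : ℝ) ^ m := by
        intro m
        rw [abs_sub_le_iff]
        constructor
        · linarith [hg_le (n + m), pow_pos (show (0:ℝ) < 1/2 by norm_num) m]
        · have h1 := hg_lt (n + m)
          have h2 : ((1:ℝ)/2) ^ (n + m) ≤ (1/2) ^ m := by
            apply pow_le_pow_of_le_one (by norm_num) (by norm_num) (by omega)
          linarith
      have : Tendsto (fun m : ℕ => ((1:ℝ)/2) ^ m) atTop (nhds 0) :=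
        tendsto_pow_atTop_nhds_zero_of_lt_one (by norm_num) (by norm_num)
      have h0 : Tendsto (fun m : ℕ => g (n + m) - t) atTop (nhds 0) :=
        squeeze_zero_norm (fun m => by rw [Real.norm_eq_abs]; exact hb m) this
      have := h0.add_const t
      simpa using this
    have hcw : ContinuousWithinAt f (Set.Icc 0 1) t := hf t ⟨ht0, ht1⟩
    apply hcw.tendsto.comp
    rw [tendsto_nhdsWithin_iff]
    exact ⟨htend, Eventually.of_forall fun m => hg_mem (n + m)⟩
  have : Tendsto (fun m => ‖f (g (n + m)) - f (g n)‖) atTop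
      (nhds ‖f t - f (g n)‖) := ((hlim.sub_const _).norm)
  exact le_of_tendsto this (Eventually.of_forall hchain)

private lemma bracket_num {x : ℝ} : (x + 1) * (2 - x) ≤ 4 := by
  nlinarith [sq_nonneg (2 * x - 1)]

private lemma holder_of_dyadic {B : Type*} [NormedAddCommGroup B] {f : ℝ → B} {c η : ℝ}
    (hf : ContinuousOn f (Set.Icc 0 1)) (hη0 : 0 < η) (hη1 : η < 1) (hc : 0 ≤ c)
    (hdy : ∀ n j : ℕ, j < 2 ^ n →
      ‖f (((j : ℝ) + 1) / 2 ^ n) - f ((j : ℝ) / 2 ^ n)‖ ≤ c * ((1 / 2 : ℝ) ^ n) ^ η)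
    {s t : ℝ} (hs0 : 0 ≤ s) (hst : s < t) (ht1 : t ≤ 1) :
    ‖f t - f s‖ ≤ (4 / ((2 ^ η - 1) * (2 ^ (1 - η) - 1))) * c * (t - s) ^ η := by
  have hts0 : 0 < t - s := by linarith
  have hts1 : t - s ≤ 1 := by linarith
  have ht0 : 0 ≤ t := le_trans hs0 hst.le
  have hs1 : s ≤ 1 := le_trans hst.le ht1
  set r : ℝ := (1 / 2 : ℝ) ^ η with hrdef
  have hr0 : 0 < r := Real.rpow_pos_of_pos (by norm_num) _
  have hr1 : r < 1 := Real.rpow_lt_one (by norm_num) (by norm_num) hη0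
  -- choose n
  have hex : ∃ m : ℕ, (1 / 2 : ℝ) ^ m < t - s :=
    exists_pow_lt_of_lt_one hts0 (by norm_num)
  classical
  set m0 := Nat.find hex with hm0def
  have hm0 : (1 / 2 : ℝ) ^ m0 < t - s := Nat.find_spec hex
  have hm0ne : m0 ≠ 0 := by
    intro h
    rw [h] at hm0
    simp at hm0
    linarith
  obtain ⟨n, hn⟩ : ∃ n, m0 = n + 1 := ⟨m0 - 1, by omega⟩
  have hn1 : (1 / 2 : ℝ) ^ (n + 1) < t - s := by rw [← hn]; exact hm0
  have hn2 : t - s ≤ (1 / 2 : ℝ) ^ n :=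
    not_lt.mp (Nat.find_min hex (by omega))
  -- dyadic approximations
  set ta := ⌊t * 2 ^ n⌋₊ with htadef
  set sa := ⌊s * 2 ^ n⌋₊ with hsadef
  have hsata : sa ≤ ta :=
    Nat.floor_mono (mul_le_mul_of_nonneg_right hst.le (by positivity))
  have hta1 : ta ≤ sa + 1 := by
    have h1 : t * 2 ^ n ≤ s * 2 ^ n + 1 := by
      have : (t - s) * 2 ^ n ≤ 1 := by
        have h2 : (t - s) * 2 ^ n ≤ (1 / 2 : ℝ) ^ n * 2 ^ n :=
          mul_le_mul_of_nonneg_right hn2 (by positivity)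
        have : ((1 : ℝ) / 2) ^ n * 2 ^ n = 1 := by
          rw [one_div, inv_pow, inv_mul_cancel₀ (by positivity)]
        linarith
      nlinarith
    calc ta ≤ ⌊s * 2 ^ n + 1⌋₊ := Nat.floor_mono h1
      _ = sa + 1 := by rw [Nat.floor_add_one (by positivity)]
  have htale : ta ≤ 2 ^ n := by
    apply Nat.floor_le_of_le
    push_cast
    nlinarith [pow_nonneg (show (0:ℝ) ≤ 2 by norm_num) n]
  -- the three pieces
  have happt := dyadic_approx hf hη0 hc hdy ht0 ht1 n
  have happs := dyadic_approx hf hη0 hc hdy hs0 hs1 n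
  have hmid : ‖f ((ta : ℝ) / 2 ^ n) - f ((sa : ℝ) / 2 ^ n)‖ ≤ c * r ^ n := by
    have := dyadic_chain hdy n (ta - sa) sa (by omega)
    have e1 : ((sa + (ta - sa) : ℕ) : ℝ) = (ta : ℝ) := by
      have : sa + (ta - sa) = ta := by omega
      rw [this]
    rw [e1] at this
    have hd1 : ((ta - sa : ℕ) : ℝ) ≤ 1 := by
      have : ta - sa ≤ 1 := by omega
      exact_mod_cast this
    calc ‖f ((ta : ℝ) / 2 ^ n) - f ((sa : ℝ) / 2 ^ n)‖
        ≤ ((ta - sa : ℕ) : ℝ) * (c * ((1 / 2 : ℝ) ^ n) ^ η) := this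
      _ ≤ 1 * (c * ((1 / 2 : ℝ) ^ n) ^ η) :=
          mul_le_mul_of_nonneg_right hd1 (by positivity)
      _ = c * r ^ n := by
          rw [one_mul, pow_rpow_comm (by norm_num : (0:ℝ) ≤ 1/2) n η]
  have htri : ‖f t - f s‖ ≤ ‖f t - f ((ta : ℝ) / 2 ^ n)‖
      + ‖f ((ta : ℝ) / 2 ^ n) - f ((sa : ℝ) / 2 ^ n)‖
      + ‖f ((sa : ℝ) / 2 ^ n) - f s‖ := by
    have h1 := dist_triangle4 (f t) (f ((ta : ℝ) / 2 ^ n)) (f ((sa : ℝ) / 2 ^ n)) (f s)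
    simpa [dist_eq_norm] using h1
  have hsnorm : ‖f ((sa : ℝ) / 2 ^ n) - f s‖ = ‖f s - f ((sa : ℝ) / 2 ^ n)‖ :=
    norm_sub_rev _ _
  have htotal : ‖f t - f s‖ ≤ c * r ^ n * (1 + 2 * r * (1 - r)⁻¹) := by
    have h2 : c * r ^ (n + 1) * (1 - r)⁻¹ = c * r ^ n * (r * (1 - r)⁻¹) := by ring
    calc ‖f t - f s‖ ≤ _ := htri
      _ ≤ c * r ^ (n + 1) * (1 - r)⁻¹ + c * r ^ n + c * r ^ (n + 1) * (1 - r)⁻¹ := by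
          rw [hsnorm]
          exact add_le_add (add_le_add happt hmid) happs
      _ = c * r ^ n * (1 + 2 * r * (1 - r)⁻¹) := by ring
  -- convert r ^ n to (t - s) ^ η
  set x : ℝ := (2 : ℝ) ^ η with hxdef
  have hx1 : 1 < x := by
    rw [hxdef]
    rw [show (1:ℝ) = (2:ℝ) ^ (0:ℝ) by simp]
    exact Real.rpow_lt_rpow_of_exponent_lt (by norm_num) hη0
  have hx2 : x < 2 := by
    rw [hxdef]
    calc (2:ℝ) ^ η < 2 ^ (1:ℝ) := Real.rpow_lt_rpow_of_exponent_lt (by norm_num) hη1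
      _ = 2 := Real.rpow_one 2
  have hx0 : 0 < x := by linarith
  have hrx : r = x⁻¹ := by
    rw [hrdef, hxdef, one_div, Real.inv_rpow (by norm_num : (0:ℝ) ≤ 2)]
  have h2eta : (2 : ℝ) ^ (1 - η) = 2 / x := by
    rw [hxdef, Real.rpow_sub (by norm_num : (0:ℝ) < 2), Real.rpow_one]
  have hrn : r ^ n ≤ x * (t - s) ^ η := by
    have h1 : ((1 / 2 : ℝ) ^ n) ≤ 2 * (t - s) := by
      have : ((1:ℝ)/2) ^ n = 2 * ((1:ℝ)/2) ^ (n + 1) := by ring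
      linarith
    have h2 : r ^ n = ((1 / 2 : ℝ) ^ n) ^ η := by
      rw [hrdef, pow_rpow_comm (by norm_num : (0:ℝ) ≤ 1/2) n η]
    rw [h2]
    calc ((1 / 2 : ℝ) ^ n) ^ η ≤ (2 * (t - s)) ^ η :=
        Real.rpow_le_rpow (by positivity) h1 hη0.le
      _ = x * (t - s) ^ η := by
          rw [Real.mul_rpow (by norm_num) hts0.le, hxdef]
  -- bracket bound
  have hbr : x * (1 + 2 * r * (1 - r)⁻¹) ≤ 4 / ((x - 1) * (2 / x - 1)) := by
    have hx1' : 0 < x - 1 := by linarith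
    have h2x : 0 < 2 - x := by linarith
    have e1 : (1 - x⁻¹)⁻¹ = x / (x - 1) := by
      rw [inv_eq_iff_eq_inv, inv_div]
      field_simp
    have e2 : (x - 1) * (2 / x - 1) = (x - 1) * (2 - x) / x := by
      field_simp
    rw [hrx, e1, e2, le_div_iff₀ (by positivity)]
    have e3 : x * (1 + 2 * x⁻¹ * (x / (x - 1))) * ((x - 1) * (2 - x) / x)
        = (x + 1) * (2 - x) := by
      field_simp
      ring
    rw [e3]
    exact bracket_num
  -- combine
  calc ‖f t - f s‖ ≤ c * r ^ n * (1 + 2 * r * (1 - r)⁻¹) := htotal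
    _ ≤ c * (x * (t - s) ^ η) * (1 + 2 * r * (1 - r)⁻¹) := by
        apply mul_le_mul_of_nonneg_right _ _
        · exact mul_le_mul_of_nonneg_left hrn hc
        · have : 0 < (1 - r)⁻¹ := by
            rw [inv_pos]; linarith
          nlinarith [hr0]
    _ = c * (t - s) ^ η * (x * (1 + 2 * r * (1 - r)⁻¹)) := by ring
    _ ≤ c * (t - s) ^ η * (4 / ((x - 1) * (2 / x - 1))) := by
        apply mul_le_mul_of_nonneg_left hbr (by positivity)
    _ = 4 / ((2 ^ η - 1) * (2 ^ (1 - η) - 1)) * c * (t - s) ^ η := by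
        rw [h2eta, hxdef]
        ring

/-- stretched-exponential tails of the marginal at time 1 transfer to
the η-Hölder seminorm of an `H`-self-similar process with stationary increments,
with the explicit constant `K_η = 4/((2^η−1)(2^{1−η}−1))`, for every `η < H`. -/
theorem stmt_16 {B : Type*} [NormedAddCommGroup B] [NormedSpace ℝ B] [CompleteSpace B]
    [TopologicalSpace.SeparableSpace B] [MeasurableSpace B] [BorelSpace B]
    {Ω : Type*} [MeasurableSpace Ω] (μ : Measure Ω) [IsProbabilityMeasure μ]
    (H : ℝ) (hH0 : 0 < H) (hH1 : H ≤ 1)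
    (X : ℝ → Ω → B)
    (hcont : ∀ᵐ ω ∂μ,
      ContinuousOn (fun t => X t ω) (Set.Icc (0:ℝ) 1) ∧ X 0 ω = 0)
    (hss : ∀ s t : ℝ, 0 ≤ s → s ≤ t → t ≤ 1 →
      IdentDistrib (fun ω => X t ω - X s ω) (fun ω => (t - s) ^ H • X 1 ω) μ μ)
    (α k : ℝ) (hα : 0 < α) (hk : 0 < k)
    (htail : (fun b => (μ {ω | b < ‖X 1 ω‖}).toReal) =O[atTop]
      fun b => Real.exp (-(b ^ α / k))) :
    ∀ η : ℝ, 0 < η → η < H →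
      (fun b => (μ {ω | ∃ s t : ℝ, 0 ≤ s ∧ s < t ∧ t ≤ 1 ∧
          b < ‖X t ω - X s ω‖ / (t - s) ^ η}).toReal) =O[atTop]
        fun b => Real.exp (-((4 / ((2 ^ η - 1) * (2 ^ (1 - η) - 1))) ^ (-α) *
          b ^ α / k)) := by
  intro η hη0 hηH
  have hη1 : η < 1 := lt_of_lt_of_le hηH hH1
  set K : ℝ := 4 / ((2 ^ η - 1) * (2 ^ (1 - η) - 1)) with hKdef
  have h2η : (1 : ℝ) < 2 ^ η := by
    rw [show (1:ℝ) = (2:ℝ) ^ (0:ℝ) by simp]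
    exact Real.rpow_lt_rpow_of_exponent_lt (by norm_num) hη0
  have h2η' : (1 : ℝ) < 2 ^ (1 - η) := by
    rw [show (1:ℝ) = (2:ℝ) ^ (0:ℝ) by simp]
    exact Real.rpow_lt_rpow_of_exponent_lt (by norm_num) (by linarith)
  have hK : 0 < K := by
    rw [hKdef]
    apply div_pos (by norm_num)
    apply mul_pos <;> linarith
  -- extract the tail constant
  rw [isBigO_iff] at htail
  obtain ⟨C, hC⟩ := htail
  rw [eventually_atTop] at hC
  obtain ⟨b0, hb0⟩ := hC
  set C' : ℝ := max C 1 with hC'def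
  have hC'1 : (1:ℝ) ≤ C' := le_max_right _ _
  have hC'0 : 0 < C' := lt_of_lt_of_le one_pos hC'1
  have htail' : ∀ x : ℝ, b0 ≤ x →
      (μ {ω | x < ‖X 1 ω‖}).toReal ≤ C' * Real.exp (-(x ^ α / k)) := by
    intro x hx
    have h := hb0 x hx
    rw [Real.norm_eq_abs, Real.norm_eq_abs, abs_of_nonneg ENNReal.toReal_nonneg,
      abs_of_nonneg (Real.exp_nonneg _)] at h
    calc (μ {ω | x < ‖X 1 ω‖}).toReal ≤ C * Real.exp (-(x ^ α / k)) := h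
      _ ≤ C' * Real.exp (-(x ^ α / k)) :=
          mul_le_mul_of_nonneg_right (le_max_left _ _) (Real.exp_nonneg _)
  set δc : ℝ := (H - η) * α * Real.log 2 with hδcdef
  have hδc : 0 < δc := by
    apply mul_pos (mul_pos (by linarith) hα) (Real.log_pos (by norm_num))
  -- eventual condition (3)
  have hcond3 : ∀ᶠ b in atTop, Real.log 4 ≤ (b / K) ^ α / k * δc := by
    have h1 : Tendsto (fun b : ℝ => b / K) atTop atTop :=
      Tendsto.atTop_div_const hK tendsto_id
    have h2 : Tendsto (fun b : ℝ => (b / K) ^ α) atTop atTop :=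
      (tendsto_rpow_atTop hα).comp h1
    have h3 : Tendsto (fun b : ℝ => (b / K) ^ α / k) atTop atTop :=
      h2.atTop_div_const hk
    have h4 : Tendsto (fun b : ℝ => (b / K) ^ α / k * δc) atTop atTop :=
      h3.atTop_mul_const hδc
    exact h4.eventually_ge_atTop _
  rw [isBigO_iff]
  refine ⟨2 * C', ?_⟩
  filter_upwards [eventually_ge_atTop (1 : ℝ), eventually_ge_atTop (K * b0),
    eventually_ge_atTop (K * 1), hcond3] with b hb1 hb2 hbK hb3
  have hbpos : (0:ℝ) < b := lt_of_lt_of_le one_pos hb1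
  have hbK0 : 0 ≤ b / K := by positivity
  have hbKb0 : b0 ≤ b / K := by
    rw [le_div_iff₀ hK]
    linarith [hb2]
  -- the dyadic events
  set θ : ℕ → ℝ := fun n => b / K * ((1 / 2 : ℝ) ^ n) ^ η with hθdef
  set A : ℕ → ℕ → Set Ω := fun n j =>
    {ω | θ n < ‖X (((j : ℝ) + 1) / 2 ^ n) ω - X ((j : ℝ) / 2 ^ n) ω‖} with hAdef
  set N : Set Ω := {ω | ¬(ContinuousOn (fun t => X t ω) (Set.Icc (0:ℝ) 1) ∧ X 0 ω = 0)}
    with hNdef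
  have hN : μ N = 0 := ae_iff.mp hcont
  -- inclusion
  have hsub : {ω | ∃ s t : ℝ, 0 ≤ s ∧ s < t ∧ t ≤ 1 ∧
      b < ‖X t ω - X s ω‖ / (t - s) ^ η} ⊆
      N ∪ ⋃ n : ℕ, ⋃ j ∈ Finset.range (2 ^ n), A n j := by
    intro ω hω
    by_contra hcon
    rw [Set.mem_union] at hcon
    push_neg at hcon
    obtain ⟨hωN, hωA⟩ := hcon
    have hωc : ContinuousOn (fun t => X t ω) (Set.Icc (0:ℝ) 1) := by
      by_contra hc
      exact hωN (by simp only [hNdef, Set.mem_setOf_eq]; tauto)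
    have hdy : ∀ n j : ℕ, j < 2 ^ n →
        ‖X (((j : ℝ) + 1) / 2 ^ n) ω - X ((j : ℝ) / 2 ^ n) ω‖
          ≤ (b / K) * ((1 / 2 : ℝ) ^ n) ^ η := by
      intro n j hj
      have : ω ∉ A n j := by
        intro hmem
        exact hωA (Set.mem_iUnion.mpr ⟨n, Set.mem_iUnion₂.mpr ⟨j, Finset.mem_range.mpr hj, hmem⟩⟩)
      simpa [hAdef, hθdef, not_lt] using this
    obtain ⟨s, t, hs0, hst, ht1, hb⟩ := hω
    have hdet := holder_of_dyadic hωc hη0 hη1 hbK0 hdy hs0 hst ht1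
    have hpow : (0:ℝ) < (t - s) ^ η := Real.rpow_pos_of_pos (by linarith) _
    rw [lt_div_iff₀ hpow] at hb
    have hKb : K * (b / K) = b := by field_simp
    rw [← hKdef, hKb] at hdet
    linarith
  -- per (n, j) measure bound
  set y : ℕ → ℝ := fun n => b / K * ((1 / 2 : ℝ) ^ n) ^ (η - H) with hydef
  have hmeasA : ∀ n j : ℕ, j < 2 ^ n →
      μ (A n j) ≤ ENNReal.ofReal (C' * Real.exp (-((y n) ^ α / k))) := by
    intro n j hj
    have hpow2 : (0:ℝ) < (1 / 2 : ℝ) ^ n := by positivity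
    set s' : ℝ := (j : ℝ) / 2 ^ n with hs'def
    set t' : ℝ := ((j : ℝ) + 1) / 2 ^ n with ht'def
    have hs'0 : 0 ≤ s' := by positivity
    have hst' : s' ≤ t' := by
      rw [hs'def, ht'def]
      gcongr
      linarith
    have ht'1 : t' ≤ 1 := by
      rw [ht'def, div_le_one (by positivity)]
      have : (j : ℝ) + 1 ≤ ((2 ^ n : ℕ) : ℝ) := by
        exact_mod_cast Nat.succ_le_of_lt hj
      calc (j : ℝ) + 1 ≤ ((2 ^ n : ℕ) : ℝ) := this
        _ = (2 : ℝ) ^ n := by push_cast; ring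
    have hts : t' - s' = (1 / 2 : ℝ) ^ n := by
      rw [ht'def, hs'def, div_sub_div_same, add_sub_cancel_left, div_pow, one_pow]
    have hid := hss s' t' hs'0 hst' ht'1
    have hmeasS : MeasurableSet {v : B | θ n < ‖v‖} :=
      (isOpen_lt continuous_const continuous_norm).measurableSet
    have hA_eq : A n j = (fun ω => X t' ω - X s' ω) ⁻¹' {v : B | θ n < ‖v‖} := rfl
    have hρ : (0:ℝ) < ((1 / 2 : ℝ) ^ n) ^ H := Real.rpow_pos_of_pos hpow2 _
    have h2 : (fun ω => (t' - s') ^ H • X 1 ω) ⁻¹' {v : B | θ n < ‖v‖}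
        = {ω | y n < ‖X 1 ω‖} := by
      ext ω
      simp only [Set.mem_preimage, Set.mem_setOf_eq, norm_smul, Real.norm_eq_abs, hts]
      rw [abs_of_pos hρ, ← div_lt_iff₀' hρ]
      have : θ n / ((1 / 2 : ℝ) ^ n) ^ H = y n := by
        rw [hθdef, hydef]
        simp only
        rw [Real.rpow_sub hpow2, mul_div_assoc]
      rw [this]
    have key : μ (A n j) = μ {ω | y n < ‖X 1 ω‖} := by
      rw [hA_eq, hid.measure_mem_eq hmeasS, h2]
    rw [key]
    have hw1 : (1:ℝ) ≤ ((1 / 2 : ℝ) ^ n) ^ (η - H) := by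
      apply Real.one_le_rpow_of_pos_of_le_one_of_nonpos hpow2
      · apply pow_le_one₀ (by norm_num) (by norm_num)
      · linarith
    have hy_ge : b0 ≤ y n := by
      calc b0 ≤ b / K := hbKb0
        _ ≤ y n := le_mul_of_one_le_right hbK0 hw1
    have h3 := htail' (y n) hy_ge
    calc μ {ω | y n < ‖X 1 ω‖}
        = ENNReal.ofReal ((μ {ω | y n < ‖X 1 ω‖}).toReal) :=
          (ENNReal.ofReal_toReal (measure_ne_top μ _)).symm
      _ ≤ ENNReal.ofReal (C' * Real.exp (-((y n) ^ α / k))) :=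
          ENNReal.ofReal_le_ofReal h3
  -- real per-n inequality
  have realineq : ∀ n : ℕ, (2:ℝ) ^ n * (C' * Real.exp (-((y n) ^ α / k)))
      ≤ C' * Real.exp (-((b / K) ^ α / k)) * (1 / 2 : ℝ) ^ n := by
    intro n
    have hpow2 : (0:ℝ) < (1 / 2 : ℝ) ^ n := by positivity
    have hwpos : (0:ℝ) < ((1 / 2 : ℝ) ^ n) ^ (η - H) := Real.rpow_pos_of_pos hpow2 _
    have hyα : (y n) ^ α = (b / K) ^ α * Real.exp (n * δc) := by
      rw [hydef]
      simp only
      rw [Real.mul_rpow hbK0 hwpos.le, ← Real.rpow_natCast (1/2 : ℝ) n,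
        ← Real.rpow_mul (by norm_num : (0:ℝ) ≤ 1/2),
        ← Real.rpow_mul (by norm_num : (0:ℝ) ≤ 1/2),
        Real.rpow_def_of_pos (by norm_num : (0:ℝ) < 1/2)]
      congr 2
      rw [hδcdef, one_div, Real.log_inv]
      ring
    set A' : ℝ := (b / K) ^ α / k with hA'def
    have hA'0 : 0 ≤ A' := by
      rw [hA'def]
      positivity
    have hexp1 : A' + n * Real.log 4 ≤ (y n) ^ α / k := by
      rw [hyα]
      have h1 : 1 + (n:ℝ) * δc ≤ Real.exp (n * δc) := by
        have := Real.add_one_le_exp ((n:ℝ) * δc)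
        linarith
      have h2 : A' * (1 + (n:ℝ) * δc) ≤ A' * Real.exp (n * δc) :=
        mul_le_mul_of_nonneg_left h1 hA'0
      have h3 : (n:ℝ) * Real.log 4 ≤ (n:ℝ) * (A' * δc) :=
        mul_le_mul_of_nonneg_left hb3 (Nat.cast_nonneg n)
      have h4 : (b / K) ^ α * Real.exp (n * δc) / k = A' * Real.exp (n * δc) := by
        rw [hA'def]; ring
      rw [h4]
      nlinarith
    have hexp2 : Real.exp (-((y n) ^ α / k)) ≤ Real.exp (-A') * ((4:ℝ) ^ n)⁻¹ := by
      have h5 : Real.exp (-(A' + n * Real.log 4)) = Real.exp (-A') * ((4:ℝ) ^ n)⁻¹ := by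
        rw [neg_add, Real.exp_add]
        congr 1
        rw [Real.exp_neg, Real.exp_nat_mul, Real.exp_log (by norm_num)]
      rw [← h5]
      exact Real.exp_le_exp.mpr (by linarith)
    calc (2:ℝ) ^ n * (C' * Real.exp (-((y n) ^ α / k)))
        ≤ (2:ℝ) ^ n * (C' * (Real.exp (-A') * ((4:ℝ) ^ n)⁻¹)) := by
          apply mul_le_mul_of_nonneg_left _ (by positivity)
          exact mul_le_mul_of_nonneg_left hexp2 hC'0.le
      _ = C' * Real.exp (-A') * ((2:ℝ) ^ n * ((4:ℝ) ^ n)⁻¹) := by ring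
      _ = C' * Real.exp (-A') * (1 / 2 : ℝ) ^ n := by
          congr 1
          rw [← div_eq_mul_inv, ← div_pow]
          norm_num
  -- per-n ENNReal bound
  have hterm : ∀ n : ℕ, (∑ j ∈ Finset.range (2 ^ n), μ (A n j))
      ≤ ENNReal.ofReal (C' * Real.exp (-((b / K) ^ α / k))) * (2⁻¹ : ℝ≥0∞) ^ n := by
    intro n
    calc (∑ j ∈ Finset.range (2 ^ n), μ (A n j))
        ≤ ∑ _j ∈ Finset.range (2 ^ n),
            ENNReal.ofReal (C' * Real.exp (-((y n) ^ α / k))) := by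
          apply Finset.sum_le_sum
          intro j hj
          exact hmeasA n j (Finset.mem_range.mp hj)
      _ = (2 ^ n : ℕ) * ENNReal.ofReal (C' * Real.exp (-((y n) ^ α / k))) := by
          rw [Finset.sum_const, Finset.card_range, nsmul_eq_mul]
      _ = ENNReal.ofReal ((2:ℝ) ^ n * (C' * Real.exp (-((y n) ^ α / k)))) := by
          rw [ENNReal.ofReal_mul (by positivity : (0:ℝ) ≤ (2:ℝ) ^ n),
            ENNReal.ofReal_pow (by norm_num : (0:ℝ) ≤ 2)]
          congr 1
          · push_cast
            norm_num [ENNReal.ofReal_ofNat]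
      _ ≤ ENNReal.ofReal (C' * Real.exp (-((b / K) ^ α / k)) * (1 / 2 : ℝ) ^ n) :=
          ENNReal.ofReal_le_ofReal (realineq n)
      _ = ENNReal.ofReal (C' * Real.exp (-((b / K) ^ α / k))) * (2⁻¹ : ℝ≥0∞) ^ n := by
          rw [ENNReal.ofReal_mul (by positivity),
            ENNReal.ofReal_pow (by norm_num : (0:ℝ) ≤ 1/2)]
          congr 2
          rw [show (1/2:ℝ) = (2:ℝ)⁻¹ by norm_num,
            ENNReal.ofReal_inv_of_pos (by norm_num : (0:ℝ) < 2)]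
          norm_num [ENNReal.ofReal_ofNat]
  -- total bound
  have hμsum : μ {ω | ∃ s t : ℝ, 0 ≤ s ∧ s < t ∧ t ≤ 1 ∧
      b < ‖X t ω - X s ω‖ / (t - s) ^ η}
      ≤ ENNReal.ofReal (2 * C' * Real.exp (-((b / K) ^ α / k))) := by
    calc μ {ω | ∃ s t : ℝ, 0 ≤ s ∧ s < t ∧ t ≤ 1 ∧
        b < ‖X t ω - X s ω‖ / (t - s) ^ η}
        ≤ μ (N ∪ ⋃ n : ℕ, ⋃ j ∈ Finset.range (2 ^ n), A n j) := measure_mono hsub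
      _ ≤ μ N + μ (⋃ n : ℕ, ⋃ j ∈ Finset.range (2 ^ n), A n j) := measure_union_le _ _
      _ = μ (⋃ n : ℕ, ⋃ j ∈ Finset.range (2 ^ n), A n j) := by rw [hN, zero_add]
      _ ≤ ∑' n : ℕ, μ (⋃ j ∈ Finset.range (2 ^ n), A n j) := measure_iUnion_le _
      _ ≤ ∑' n : ℕ, ∑ j ∈ Finset.range (2 ^ n), μ (A n j) :=
          ENNReal.tsum_le_tsum (fun n => measure_biUnion_finset_le _ _)
      _ ≤ ∑' n : ℕ, ENNReal.ofReal (C' * Real.exp (-((b / K) ^ α / k))) * (2⁻¹ : ℝ≥0∞) ^ n :=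
          ENNReal.tsum_le_tsum hterm
      _ = ENNReal.ofReal (C' * Real.exp (-((b / K) ^ α / k))) * ∑' n : ℕ, (2⁻¹ : ℝ≥0∞) ^ n :=
          ENNReal.tsum_mul_left
      _ = ENNReal.ofReal (C' * Real.exp (-((b / K) ^ α / k))) * 2 := by
          rw [ENNReal.tsum_geometric, ENNReal.one_sub_inv_two, inv_inv]
      _ = ENNReal.ofReal (2 * C' * Real.exp (-((b / K) ^ α / k))) := by
          rw [show (2 : ℝ≥0∞) = ENNReal.ofReal 2 by norm_num,
            ← ENNReal.ofReal_mul (by positivity)]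
          ring_nf
  have hfinal := ENNReal.toReal_le_of_le_ofReal (by positivity) hμsum
  have hexp_eq : (b / K) ^ α / k = K ^ (-α) * b ^ α / k := by
    rw [Real.div_rpow hbpos.le hK.le, Real.rpow_neg hK.le]
    ring
  rw [Real.norm_eq_abs, Real.norm_eq_abs, abs_of_nonneg ENNReal.toReal_nonneg,
    abs_of_nonneg (Real.exp_nonneg _)]
  calc (μ {ω | ∃ s t : ℝ, 0 ≤ s ∧ s < t ∧ t ≤ 1 ∧
      b < ‖X t ω - X s ω‖ / (t - s) ^ η}).toReal
      ≤ 2 * C' * Real.exp (-((b / K) ^ α / k)) := hfinal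
    _ = 2 * C' * Real.exp (-(K ^ (-α) * b ^ α / k)) := by rw [hexp_eq]
end

section
/- Let B be a separable Banach space with its Borel σ-algebra, (Ω, F, ℙ) a probability space, H ∈ (0,1], and X : [0,1] × Ω → B a stochastic process such that for all 0 ≤ s ≤ t ≤ 1 the B-valued random variables X(t) − X(s) and (t−s)^{H}·X(1) are identically distributed. Fix 0 < η < H and define the dyadic Ciesielski norm N(ω) = ‖X(1,ω)‖_B + sup_{j≥1} 2^{jη} · max_{1 ≤ k ≤ 2^{j−1}} ‖X(2k·2^{−j},ω) − 2·X((2k−1)·2^{−j},ω) + X((2k−2)·2^{−j},ω)‖_B. Then for every b > 0, ℙ(N > 4b) ≤ Σ_{j=1}^{∞} 2^{j+1}·ℙ(‖X(1)‖_B > b·2^{j(H−η)}) + ℙ(‖X(1)‖_B > 2b). -/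
open MeasureTheory ProbabilityTheory
open scoped ENNReal

/-- the dyadic chaining inequality for the Ciesielski norm of a
process with stationary, self-similar increments. -/
theorem stmt_17 {B : Type*} [NormedAddCommGroup B] [NormedSpace ℝ B] [CompleteSpace B]
    [TopologicalSpace.SeparableSpace B] [MeasurableSpace B] [BorelSpace B]
    {Ω : Type*} [MeasurableSpace Ω] (μ : Measure Ω) [IsProbabilityMeasure μ]
    (H : ℝ) (hH0 : 0 < H) (hH1 : H ≤ 1)
    (X : ℝ → Ω → B)
    (hss : ∀ s t : ℝ, 0 ≤ s → s ≤ t → t ≤ 1 →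
      IdentDistrib (fun ω => X t ω - X s ω) (fun ω => (t - s) ^ H • X 1 ω) μ μ)
    (η : ℝ) (hη0 : 0 < η) (hηH : η < H) (b : ℝ) (hb : 0 < b) :
    μ {ω | ENNReal.ofReal (4 * b) <
        ENNReal.ofReal ‖X 1 ω‖ +
          ⨆ j : ℕ, ⨆ _ : 1 ≤ j, ⨆ k ∈ Finset.Icc (1:ℕ) (2 ^ (j - 1)),
            ENNReal.ofReal ((2:ℝ) ^ ((j : ℝ) * η) *
              ‖X ((2 * (k:ℝ)) * (2:ℝ) ^ (-(j:ℝ))) ω -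
                (2:ℝ) • X ((2 * (k:ℝ) - 1) * (2:ℝ) ^ (-(j:ℝ))) ω +
                X ((2 * (k:ℝ) - 2) * (2:ℝ) ^ (-(j:ℝ))) ω‖)} ≤
      (∑' j : {j : ℕ // 1 ≤ j},
          (2 : ℝ≥0∞) ^ ((j : ℕ) + 1) *
            μ {ω | b * (2:ℝ) ^ (((j : ℕ) : ℝ) * (H - η)) < ‖X 1 ω‖}) +
        μ {ω | 2 * b < ‖X 1 ω‖} := by
  classical
  set pj : ℕ → ℝ≥0∞ := fun j => μ {ω | b * (2:ℝ) ^ ((j : ℝ) * (H - η)) < ‖X 1 ω‖} with hpj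
  -- tail of a single increment of length 2^{-j}
  have inc : ∀ (j : ℕ) (s t : ℝ), 0 ≤ s → s ≤ t → t ≤ 1 → t - s = (2:ℝ) ^ (-(j:ℝ)) →
      μ {ω | b < (2:ℝ) ^ ((j:ℝ) * η) * ‖X t ω - X s ω‖} = pj j := by
    intro j s t h0 hst ht1 hts
    have hid := hss s t h0 hst ht1
    have hmeas : MeasurableSet {x : B | b < (2:ℝ) ^ ((j:ℝ) * η) * ‖x‖} :=
      measurableSet_lt measurable_const (measurable_norm.const_mul _)
    have h1 : {ω | b < (2:ℝ) ^ ((j:ℝ) * η) * ‖X t ω - X s ω‖}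
        = (fun ω => X t ω - X s ω) ⁻¹' {x | b < (2:ℝ) ^ ((j:ℝ) * η) * ‖x‖} := rfl
    rw [h1, hid.measure_mem_eq hmeas]
    have h2 : (fun ω => (t - s) ^ H • X 1 ω) ⁻¹' {x | b < (2:ℝ) ^ ((j:ℝ) * η) * ‖x‖}
        = {ω | b * (2:ℝ) ^ ((j : ℝ) * (H - η)) < ‖X 1 ω‖} := by
      ext ω
      simp only [Set.mem_preimage, Set.mem_setOf_eq, norm_smul, Real.norm_eq_abs, hts]
      have hpow : |((2:ℝ) ^ (-(j:ℝ))) ^ H| = (2:ℝ) ^ (-(j:ℝ) * H) := by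
        rw [abs_of_nonneg (Real.rpow_nonneg (Real.rpow_nonneg (by norm_num) _) _),
          ← Real.rpow_mul (by norm_num)]
      rw [hpow, ← mul_assoc, ← Real.rpow_add two_pos]
      have he : (j:ℝ) * η + (-(j:ℝ) * H) = -((j:ℝ) * (H - η)) := by ring
      have hc : (0:ℝ) < (2:ℝ) ^ ((j:ℝ) * (H - η)) := Real.rpow_pos_of_pos two_pos _
      rw [he, Real.rpow_neg (by norm_num), inv_mul_eq_div, lt_div_iff₀ hc]
    rw [h2]
  -- the bad events at level j, block k
  set E : ℕ → ℕ → Set Ω := fun j k =>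
    {ω | b < (2:ℝ) ^ ((j:ℝ) * η) *
      ‖X ((2 * (k:ℝ)) * (2:ℝ) ^ (-(j:ℝ))) ω - X ((2 * (k:ℝ) - 1) * (2:ℝ) ^ (-(j:ℝ))) ω‖} ∪
    {ω | b < (2:ℝ) ^ ((j:ℝ) * η) *
      ‖X ((2 * (k:ℝ) - 1) * (2:ℝ) ^ (-(j:ℝ))) ω - X ((2 * (k:ℝ) - 2) * (2:ℝ) ^ (-(j:ℝ))) ω‖}
    with hEdef
  have hE : ∀ j : ℕ, 1 ≤ j → ∀ k ∈ Finset.Icc (1:ℕ) (2 ^ (j - 1)),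
      μ (E j k) ≤ 2 * pj j := by
    intro j hj k hk
    simp only [Finset.mem_Icc] at hk
    set r : ℝ := (2:ℝ) ^ (-(j:ℝ)) with hr
    have hrpos : 0 < r := Real.rpow_pos_of_pos two_pos _
    have hk1 : (1:ℝ) ≤ (k:ℝ) := by exact_mod_cast hk.1
    have hk2 : (2 * (k:ℝ)) * r ≤ 1 := by
      have h2k : (2 * k : ℕ) ≤ 2 ^ j := by
        calc 2 * k ≤ 2 * 2 ^ (j - 1) := Nat.mul_le_mul_left _ hk.2
          _ = 2 ^ j := by
              rw [← pow_succ']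
              congr 1
              omega
      have h2k' : 2 * (k:ℝ) ≤ (2:ℝ) ^ (j:ℕ) := by exact_mod_cast h2k
      calc (2 * (k:ℝ)) * r ≤ (2:ℝ) ^ (j:ℕ) * r :=
            mul_le_mul_of_nonneg_right h2k' hrpos.le
        _ = 1 := by
            rw [hr, ← Real.rpow_natCast 2 j, ← Real.rpow_add two_pos]
            simp
    have h0 : (0:ℝ) ≤ (2 * (k:ℝ) - 2) * r := by nlinarith
    have h01 : (2 * (k:ℝ) - 2) * r ≤ (2 * (k:ℝ) - 1) * r := by nlinarith
    have h12 : (2 * (k:ℝ) - 1) * r ≤ (2 * (k:ℝ)) * r := by nlinarith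
    have hd1 : (2 * (k:ℝ)) * r - (2 * (k:ℝ) - 1) * r = r := by ring
    have hd2 : (2 * (k:ℝ) - 1) * r - (2 * (k:ℝ) - 2) * r = r := by ring
    calc μ (E j k) ≤
        μ {ω | b < (2:ℝ) ^ ((j:ℝ) * η) *
            ‖X ((2 * (k:ℝ)) * r) ω - X ((2 * (k:ℝ) - 1) * r) ω‖} +
        μ {ω | b < (2:ℝ) ^ ((j:ℝ) * η) *
            ‖X ((2 * (k:ℝ) - 1) * r) ω - X ((2 * (k:ℝ) - 2) * r) ω‖} :=
          measure_union_le _ _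
      _ = pj j + pj j := by
          rw [inc j _ _ (le_trans h0 h01) h12 hk2 hd1,
            inc j _ _ h0 h01 (le_trans h12 hk2) hd2]
      _ = 2 * pj j := (two_mul _).symm
  -- the inclusion of the event into the union of bad events
  have hsub : {ω | ENNReal.ofReal (4 * b) <
        ENNReal.ofReal ‖X 1 ω‖ +
          ⨆ j : ℕ, ⨆ _ : 1 ≤ j, ⨆ k ∈ Finset.Icc (1:ℕ) (2 ^ (j - 1)),
            ENNReal.ofReal ((2:ℝ) ^ ((j : ℝ) * η) *
              ‖X ((2 * (k:ℝ)) * (2:ℝ) ^ (-(j:ℝ))) ω -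
                (2:ℝ) • X ((2 * (k:ℝ) - 1) * (2:ℝ) ^ (-(j:ℝ))) ω +
                X ((2 * (k:ℝ) - 2) * (2:ℝ) ^ (-(j:ℝ))) ω‖)} ⊆
      (⋃ j : {j : ℕ // 1 ≤ j}, ⋃ k ∈ Finset.Icc (1:ℕ) (2 ^ ((j:ℕ) - 1)), E (j:ℕ) k) ∪
        {ω | 2 * b < ‖X 1 ω‖} := by
    intro ω hω
    simp only [Set.mem_setOf_eq] at hω
    by_cases h2b : 2 * b < ‖X 1 ω‖
    · exact Or.inr h2b
    left
    push_neg at h2b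
    have h4 : ENNReal.ofReal (4 * b) = ENNReal.ofReal (2 * b) + ENNReal.ofReal (2 * b) := by
      rw [← ENNReal.ofReal_add (by positivity) (by positivity)]
      congr 1
      ring
    have hX1 : ENNReal.ofReal ‖X 1 ω‖ ≤ ENNReal.ofReal (2 * b) := ENNReal.ofReal_le_ofReal h2b
    set S : ℝ≥0∞ := ⨆ j : ℕ, ⨆ _ : 1 ≤ j, ⨆ k ∈ Finset.Icc (1:ℕ) (2 ^ (j - 1)),
            ENNReal.ofReal ((2:ℝ) ^ ((j : ℝ) * η) *
              ‖X ((2 * (k:ℝ)) * (2:ℝ) ^ (-(j:ℝ))) ω -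
                (2:ℝ) • X ((2 * (k:ℝ) - 1) * (2:ℝ) ^ (-(j:ℝ))) ω +
                X ((2 * (k:ℝ) - 2) * (2:ℝ) ^ (-(j:ℝ))) ω‖) with hSdef
    have hS : ENNReal.ofReal (2 * b) < S := by
      have h' : ENNReal.ofReal (2 * b) + ENNReal.ofReal (2 * b) <
          ENNReal.ofReal (2 * b) + S := by
        calc ENNReal.ofReal (2 * b) + ENNReal.ofReal (2 * b)
            = ENNReal.ofReal (4 * b) := h4.symm
          _ < ENNReal.ofReal ‖X 1 ω‖ + S := hω
          _ ≤ _ := add_le_add_left hX1 _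
      exact (ENNReal.add_lt_add_iff_left ENNReal.ofReal_ne_top).mp h'
    rw [hSdef] at hS
    rw [lt_iSup_iff] at hS
    obtain ⟨j, hS⟩ := hS
    rw [lt_iSup_iff] at hS
    obtain ⟨hj, hS⟩ := hS
    rw [lt_iSup_iff] at hS
    obtain ⟨k, hS⟩ := hS
    rw [lt_iSup_iff] at hS
    obtain ⟨hk, hS⟩ := hS
    set r : ℝ := (2:ℝ) ^ (-(j:ℝ)) with hr
    have hlt : 2 * b < (2:ℝ) ^ ((j : ℝ) * η) *
        ‖X ((2 * (k:ℝ)) * r) ω - (2:ℝ) • X ((2 * (k:ℝ) - 1) * r) ω +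
          X ((2 * (k:ℝ) - 2) * r) ω‖ :=
      (ENNReal.ofReal_lt_ofReal_iff_of_nonneg (by positivity)).mp hS
    have hD : X ((2 * (k:ℝ)) * r) ω - (2:ℝ) • X ((2 * (k:ℝ) - 1) * r) ω +
          X ((2 * (k:ℝ) - 2) * r) ω
        = (X ((2 * (k:ℝ)) * r) ω - X ((2 * (k:ℝ) - 1) * r) ω) -
          (X ((2 * (k:ℝ) - 1) * r) ω - X ((2 * (k:ℝ) - 2) * r) ω) := by
      rw [two_smul ℝ]
      abel
    have hpowpos : (0:ℝ) < (2:ℝ) ^ ((j:ℝ) * η) := Real.rpow_pos_of_pos two_pos _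
    have htri : 2 * b < (2:ℝ) ^ ((j:ℝ) * η) *
          ‖X ((2 * (k:ℝ)) * r) ω - X ((2 * (k:ℝ) - 1) * r) ω‖ +
        (2:ℝ) ^ ((j:ℝ) * η) *
          ‖X ((2 * (k:ℝ) - 1) * r) ω - X ((2 * (k:ℝ) - 2) * r) ω‖ := by
      rw [hD] at hlt
      have := norm_sub_le (X ((2 * (k:ℝ)) * r) ω - X ((2 * (k:ℝ) - 1) * r) ω)
        (X ((2 * (k:ℝ) - 1) * r) ω - X ((2 * (k:ℝ) - 2) * r) ω)
      nlinarith
    have hmem : ω ∈ E j k := by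
      by_contra hc
      simp only [hEdef, Set.mem_union, Set.mem_setOf_eq, not_or, not_lt] at hc
      rw [← hr] at hc
      linarith [hc.1, hc.2]
    exact Set.mem_iUnion.mpr ⟨⟨j, hj⟩, Set.mem_iUnion.mpr ⟨k, Set.mem_iUnion.mpr ⟨hk, hmem⟩⟩⟩
  refine le_trans (measure_mono hsub) (le_trans (measure_union_le _ _) (add_le_add ?_ le_rfl))
  refine le_trans (measure_iUnion_le _) (ENNReal.tsum_le_tsum fun j => ?_)
  calc μ (⋃ k ∈ Finset.Icc (1:ℕ) (2 ^ ((j:ℕ) - 1)), E (j:ℕ) k)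
      ≤ ∑ k ∈ Finset.Icc (1:ℕ) (2 ^ ((j:ℕ) - 1)), μ (E (j:ℕ) k) :=
        measure_biUnion_finset_le _ _
    _ ≤ (Finset.Icc (1:ℕ) (2 ^ ((j:ℕ) - 1))).card • (2 * pj (j:ℕ)) :=
        Finset.sum_le_card_nsmul _ _ _ (hE (j:ℕ) j.2)
    _ ≤ (2 : ℝ≥0∞) ^ ((j:ℕ) + 1) * pj (j:ℕ) := by
        rw [Nat.card_Icc, nsmul_eq_mul]
        have hcard : ((2 ^ ((j:ℕ) - 1) + 1 - 1 : ℕ) : ℝ≥0∞) = (2:ℝ≥0∞) ^ ((j:ℕ) - 1) := by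
          push_cast
          simp
        rw [hcard, ← mul_assoc, ← pow_succ]
        have hj1 : (j:ℕ) - 1 + 1 = (j:ℕ) := Nat.sub_add_cancel j.2
        rw [hj1]
        exact mul_le_mul_left (pow_le_pow_right₀ (by norm_num) (Nat.le_succ _)) _
end

section
/- Let B be a separable Banach space with its Borel σ-algebra, (Ω, F, ℙ) a probability space, H > 0 and 0 < η < H, and let X : [0,∞) × Ω → B be a stochastic process with almost surely continuous paths. Fix T > 0 and suppose that X is H-self-similar with scaling factor T in the sense that for every n and all times t₁, …, t_n ≥ 0, the B^n-valued random vectors (X(T·t₁), …, X(T·t_n)) and (T^{H}·X(t₁), …, T^{H}·X(t_n)) are identically distributed. Then for every b ≥ 0, ℙ( sup_{0 ≤ s < t ≤ T} ‖X(t) − X(s)‖_B/(t−s)^{η} ≤ b ) = ℙ( T^{H−η} · sup_{0 ≤ s < t ≤ 1} ‖X(t) − X(s)‖_B/(t−s)^{η} ≤ b ). -/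
open MeasureTheory ProbabilityTheory Filter

lemma holder_of_rat {B : Type*} [NormedAddCommGroup B]
    (f : ℝ → B) (hf : ContinuousOn f (Set.Ici (0:ℝ)))
    (η : ℝ) (hη : 0 < η) (U c : ℝ) (hU : 0 < U)
    (h : ∀ q r : ℚ, 0 ≤ (q:ℝ) → (q:ℝ) < r → (r:ℝ) ≤ 1 →
      ‖f (U * r) - f (U * q)‖ / (U * r - U * q) ^ η ≤ c) :
    ∀ s t : ℝ, 0 ≤ s → s < t → t ≤ U → ‖f t - f s‖ / (t - s) ^ η ≤ c := by
  intro s t hs hst htU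
  set s' := s / U with hs'
  set t' := t / U with ht'
  have hUs' : U * s' = s := by rw [hs']; exact mul_div_cancel₀ s hU.ne'
  have hUt' : U * t' = t := by rw [ht']; exact mul_div_cancel₀ t hU.ne'
  have hs'0 : 0 ≤ s' := div_nonneg hs hU.le
  have hst' : s' < t' := by
    rw [hs', ht', div_lt_div_iff_of_pos_right hU]; exact hst
  have ht'1 : t' ≤ 1 := (div_le_one hU).2 htU
  set m := (s' + t') / 2 with hm
  have hsm : s' < m := by rw [hm]; linarith
  have hmt : m < t' := by rw [hm]; linarith
  -- choose rational sequences
  have hq : ∀ n : ℕ, ∃ q : ℚ, s' < (q:ℝ) ∧ (q:ℝ) < min m (s' + 1 / (n + 1)) := by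
    intro n
    apply exists_rat_btwn
    apply lt_min hsm
    have : (0:ℝ) < 1 / (n + 1) := by positivity
    linarith
  have hr : ∀ n : ℕ, ∃ r : ℚ, max m (t' - 1 / (n + 1)) < (r:ℝ) ∧ (r:ℝ) < t' := by
    intro n
    apply exists_rat_btwn
    apply max_lt hmt
    have : (0:ℝ) < 1 / (n + 1) := by positivity
    linarith
  choose q hq1 hq2 using hq
  choose r hr1 hr2 using hr
  -- limits
  have hqlim : Tendsto (fun n : ℕ => (q n : ℝ)) atTop (nhds s') := by
    have h1 : Tendsto (fun n : ℕ => s' + 1 / ((n : ℝ) + 1)) atTop (nhds s') := by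
      have := tendsto_one_div_add_atTop_nhds_zero_nat (𝕜 := ℝ)
      simpa using tendsto_const_nhds.add this
    apply tendsto_of_tendsto_of_tendsto_of_le_of_le tendsto_const_nhds h1
    · exact fun n => (hq1 n).le
    · exact fun n => ((hq2 n).trans_le (min_le_right _ _)).le
  have hrlim : Tendsto (fun n : ℕ => (r n : ℝ)) atTop (nhds t') := by
    have h1 : Tendsto (fun n : ℕ => t' - 1 / ((n : ℝ) + 1)) atTop (nhds t') := by
      have := tendsto_one_div_add_atTop_nhds_zero_nat (𝕜 := ℝ)
      simpa using tendsto_const_nhds.sub this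
    apply tendsto_of_tendsto_of_tendsto_of_le_of_le h1 tendsto_const_nhds
    · exact fun n => ((le_max_right _ _).trans_lt (hr1 n)).le
    · exact fun n => (hr2 n).le
  have halim : Tendsto (fun n : ℕ => U * (q n : ℝ)) atTop (nhds s) := by
    rw [← hUs']; exact tendsto_const_nhds.mul hqlim
  have hblim : Tendsto (fun n : ℕ => U * (r n : ℝ)) atTop (nhds t) := by
    rw [← hUt']; exact tendsto_const_nhds.mul hrlim
  have hq0 : ∀ n, 0 ≤ (q n : ℝ) := fun n => hs'0.trans (hq1 n).le
  have hfa : Tendsto (fun n : ℕ => f (U * (q n : ℝ))) atTop (nhds (f s)) := by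
    refine ((hf s hs).tendsto).comp ?_
    rw [tendsto_nhdsWithin_iff]
    exact ⟨halim, Eventually.of_forall fun n => mul_nonneg hU.le (hq0 n)⟩
  have hfb : Tendsto (fun n : ℕ => f (U * (r n : ℝ))) atTop (nhds (f t)) := by
    refine ((hf t (hs.trans hst.le)).tendsto).comp ?_
    rw [tendsto_nhdsWithin_iff]
    refine ⟨hblim, Eventually.of_forall fun n => mul_nonneg hU.le ?_⟩
    exact hs'0.trans ((hq1 n).le.trans ((hq2 n).le.trans ((min_le_left _ _).trans
      ((le_max_left _ _).trans (hr1 n).le))))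
  have hden : Tendsto (fun n : ℕ => (U * (r n : ℝ) - U * (q n : ℝ)) ^ η) atTop
      (nhds ((t - s) ^ η)) := by
    exact ((Real.continuousAt_rpow_const (t - s) η (Or.inr hη.le)).tendsto).comp
      (hblim.sub halim)
  have hmain : Tendsto (fun n : ℕ => ‖f (U * (r n : ℝ)) - f (U * (q n : ℝ))‖ /
      (U * (r n : ℝ) - U * (q n : ℝ)) ^ η) atTop (nhds (‖f t - f s‖ / (t - s) ^ η)) := by
    exact ((hfb.sub hfa).norm).div hden (Real.rpow_pos_of_pos (sub_pos.2 hst) η).ne'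
  refine le_of_tendsto hmain (Eventually.of_forall fun n => ?_)
  refine h (q n) (r n) (hq0 n) ?_ ((hr2 n).trans_le ht'1).le
  calc (q n : ℝ) < min m (s' + 1 / (n + 1)) := hq2 n
    _ ≤ m := min_le_left _ _
    _ ≤ max m (t' - 1 / (n + 1)) := le_max_left _ _
    _ < r n := hr1 n

/-- the scaling identity for Hölder seminorms of a self-similar
process with a.s. continuous paths. -/
theorem stmt_18 {B : Type*} [NormedAddCommGroup B] [NormedSpace ℝ B] [CompleteSpace B]
    [TopologicalSpace.SeparableSpace B] [MeasurableSpace B] [BorelSpace B]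
    {Ω : Type*} [MeasurableSpace Ω] (μ : Measure Ω) [IsProbabilityMeasure μ]
    (H η : ℝ) (hH : 0 < H) (hη0 : 0 < η) (hηH : η < H)
    (X : ℝ → Ω → B)
    (hcont : ∀ᵐ ω ∂μ, ContinuousOn (fun t => X t ω) (Set.Ici (0:ℝ)))
    (T : ℝ) (hT : 0 < T)
    (hss : ∀ (n : ℕ) (t : Fin n → ℝ), (∀ i, 0 ≤ t i) →
      IdentDistrib (fun ω => fun i => X (T * t i) ω)
        (fun ω => fun i => T ^ H • X (t i) ω) μ μ)
    (b : ℝ) (hb : 0 ≤ b) :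
    μ {ω | ∀ s t : ℝ, 0 ≤ s → s < t → t ≤ T →
        ‖X t ω - X s ω‖ / (t - s) ^ η ≤ b} =
      μ {ω | ∀ s t : ℝ, 0 ≤ s → s < t → t ≤ 1 →
        T ^ (H - η) * (‖X t ω - X s ω‖ / (t - s) ^ η) ≤ b} := by
  -- enumerate the rationals in [0,1]
  obtain ⟨e, he⟩ : ∃ e : ℕ → ℚ, {q : ℚ | 0 ≤ q ∧ q ≤ 1} = Set.range e :=
    (Set.to_countable _).exists_eq_range ⟨0, by norm_num⟩
  have he01 : ∀ k, (0:ℝ) ≤ (e k : ℝ) ∧ (e k : ℝ) ≤ 1 := by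
    intro k
    have : e k ∈ {q : ℚ | 0 ≤ q ∧ q ≤ 1} := he ▸ ⟨k, rfl⟩
    exact ⟨by exact_mod_cast this.1, by exact_mod_cast this.2⟩
  have hesurj : ∀ q : ℚ, 0 ≤ q → q ≤ 1 → ∃ k, e k = q := by
    intro q h0 h1
    have : q ∈ Set.range e := he ▸ ⟨h0, h1⟩
    obtain ⟨k, hk⟩ := this; exact ⟨k, hk⟩
  set A : ℕ → Set Ω := fun n => {ω | ∀ i j : Fin n, ((e i : ℝ)) < (e j : ℝ) →
    ‖X (T * (e j : ℝ)) ω - X (T * (e i : ℝ)) ω‖ / (T * (e j : ℝ) - T * (e i : ℝ)) ^ η ≤ b}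
    with hA
  set C : ℕ → Set Ω := fun n => {ω | ∀ i j : Fin n, ((e i : ℝ)) < (e j : ℝ) →
    T ^ (H - η) * (‖X ((e j : ℝ)) ω - X ((e i : ℝ)) ω‖ / ((e j : ℝ) - (e i : ℝ)) ^ η) ≤ b}
    with hC
  have posT : (0:ℝ) < T ^ (H - η) := Real.rpow_pos_of_pos hT _
  -- the finite-dimensional sets and identical distribution
  have hfin : ∀ n : ℕ, μ (A n) = μ (C n) ∧ NullMeasurableSet (A n) μ ∧
      NullMeasurableSet (C n) μ := by
    intro n
    set S : Set (Fin n → B) := {v | ∀ i j : Fin n, ((e i : ℝ)) < (e j : ℝ) →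
      ‖v j - v i‖ / (T * (e j : ℝ) - T * (e i : ℝ)) ^ η ≤ b} with hSdef
    have hS : MeasurableSet S := by
      have : S = ⋂ i : Fin n, ⋂ j : Fin n, {v : Fin n → B | ((e i : ℝ)) < (e j : ℝ) →
          ‖v j - v i‖ / (T * (e j : ℝ) - T * (e i : ℝ)) ^ η ≤ b} := by
        ext v; simp [hSdef, Set.mem_iInter]
      rw [this]
      refine MeasurableSet.iInter fun i => MeasurableSet.iInter fun j => ?_
      by_cases hij : ((e i : ℝ)) < (e j : ℝ)
      · simp only [hij, true_implies]
        have hcontv : Continuous fun v : Fin n → B =>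
            ‖v j - v i‖ / (T * (e j : ℝ) - T * (e i : ℝ)) ^ η :=
          (((continuous_apply j).sub (continuous_apply i)).norm).div_const _
        exact measurableSet_le hcontv.measurable measurable_const
      · simp only [hij, false_implies]; exact MeasurableSet.univ
    have hid := hss n (fun i => (e i : ℝ)) (fun i => (he01 _).1)
    have hApre : A n = (fun ω => fun i : Fin n => X (T * (e i : ℝ)) ω) ⁻¹' S := rfl
    have hCpre : C n = (fun ω => fun i : Fin n => T ^ H • X ((e i : ℝ)) ω) ⁻¹' S := by
      ext ω
      simp only [hC, hSdef, Set.mem_setOf_eq, Set.mem_preimage]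
      refine forall_congr' fun i => forall_congr' fun j => ?_
      refine imp_congr_right fun hij => ?_
      have hkey : ‖T ^ H • X ((e j : ℝ)) ω - T ^ H • X ((e i : ℝ)) ω‖ /
          (T * (e j : ℝ) - T * (e i : ℝ)) ^ η =
          T ^ (H - η) * (‖X ((e j : ℝ)) ω - X ((e i : ℝ)) ω‖ /
            ((e j : ℝ) - (e i : ℝ)) ^ η) := by
        rw [← smul_sub, norm_smul, Real.norm_eq_abs,
          abs_of_pos (Real.rpow_pos_of_pos hT H)]
        have h1 : T * (e j : ℝ) - T * (e i : ℝ) = T * ((e j : ℝ) - (e i : ℝ)) := by ring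
        rw [h1, Real.mul_rpow hT.le (sub_nonneg.2 hij.le), mul_div_mul_comm,
          ← Real.rpow_sub hT]
      rw [hkey]
    refine ⟨?_, ?_, ?_⟩
    · rw [hApre, hCpre]; exact hid.measure_mem_eq hS
    · rw [hApre]; exact hid.aemeasurable_fst.nullMeasurable hS
    · rw [hCpre]; exact hid.aemeasurable_snd.nullMeasurable hS
  have hAanti : Antitone A := by
    intro m n hmn ω hω i j hij
    exact hω (Fin.castLE hmn i) (Fin.castLE hmn j) hij
  have hCanti : Antitone C := by
    intro m n hmn ω hω i j hij
    exact hω (Fin.castLE hmn i) (Fin.castLE hmn j) hij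
  -- a.e. identification of the full events with the countable intersections
  have h1 : μ {ω | ∀ s t : ℝ, 0 ≤ s → s < t → t ≤ T →
      ‖X t ω - X s ω‖ / (t - s) ^ η ≤ b} = μ (⋂ n, A n) := by
    apply measure_congr
    rw [Filter.eventuallyEq_set]
    filter_upwards [hcont] with ω hω
    simp only [Set.mem_setOf_eq, Set.mem_iInter]
    constructor
    · intro hP n i j hij
      refine hP (T * (e i : ℝ)) (T * (e j : ℝ)) (mul_nonneg hT.le (he01 _).1)
        (mul_lt_mul_of_pos_left hij hT) ?_
      have := (he01 (j : ℕ)).2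
      nlinarith
    · intro hAll
      refine holder_of_rat (fun u => X u ω) hω η hη0 T b hT ?_
      intro q r hq0 hqr hr1
      obtain ⟨k, hk⟩ := hesurj q (by exact_mod_cast hq0)
        (by exact_mod_cast hqr.le.trans hr1)
      obtain ⟨l, hl⟩ := hesurj r (by exact_mod_cast hq0.trans hqr.le) (by exact_mod_cast hr1)
      have := hAll (max k l + 1) ⟨k, by omega⟩ ⟨l, by omega⟩
      simp only [hk, hl] at this
      exact this hqr
  have h2 : μ {ω | ∀ s t : ℝ, 0 ≤ s → s < t → t ≤ 1 →
      T ^ (H - η) * (‖X t ω - X s ω‖ / (t - s) ^ η) ≤ b} = μ (⋂ n, C n) := by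
    apply measure_congr
    rw [Filter.eventuallyEq_set]
    filter_upwards [hcont] with ω hω
    simp only [Set.mem_setOf_eq, Set.mem_iInter]
    constructor
    · intro hP n i j hij
      exact hP ((e i : ℝ)) ((e j : ℝ)) (he01 _).1 hij (he01 _).2
    · intro hAll
      have key := holder_of_rat (fun u => X u ω) hω η hη0 1 (b / T ^ (H - η)) one_pos ?_
      · intro s t hs hst ht1
        rw [mul_comm]
        exact (le_div_iff₀ posT).1 (key s t hs hst ht1)
      · intro q r hq0 hqr hr1
        obtain ⟨k, hk⟩ := hesurj q (by exact_mod_cast hq0)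
          (by exact_mod_cast hqr.le.trans hr1)
        obtain ⟨l, hl⟩ := hesurj r (by exact_mod_cast hq0.trans hqr.le) (by exact_mod_cast hr1)
        have := hAll (max k l + 1) ⟨k, by omega⟩ ⟨l, by omega⟩
        simp only [hk, hl] at this
        have h3 := this hqr
        rw [one_mul, one_mul, le_div_iff₀ posT, mul_comm]
        exact h3
  rw [h1, h2]
  have hAmeas : μ (⋂ n, A n) = ⨅ n, μ (A n) :=
    hAanti.measure_iInter (fun n => (hfin n).2.1)
      ⟨0, measure_ne_top μ _⟩
  have hCmeas : μ (⋂ n, C n) = ⨅ n, μ (C n) :=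
    hCanti.measure_iInter (fun n => (hfin n).2.2)
      ⟨0, measure_ne_top μ _⟩
  rw [hAmeas, hCmeas]
  exact iInf_congr fun n => (hfin n).1
end
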